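/- arXiv:0810.0352 — 5 statements merged into one kernel-verified Lean document; each statement's English description precedes it below -/
import Mathlib

section
/- Let n ≥ 3 and let S_n be the monoid presented by generators a_1, …, a_n and relations a_1 a_2 ⋯ a_n = a_{σ(1)} ⋯ a_{σ(n)} for σ in the cyclic group generated by the n-cycle. Every element a ∈ S_n can be written uniquely as a product a = a_1^i (a_1 a_2 ⋯ a_n)^ε (a_2 ⋯ a_n)^j b, where ε ∈ {0,1}, b ∈ S_n \ (a_1 S_n ∪ (a_2 ⋯ a_n) S_n), i, j are non-negative integers, and the condition holds that if j ≥ 1 then ε = 1 or i = 0. -/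
/-- The word `a_{σ(1)} a_{σ(2)} ⋯ a_{σ(n)}` in the free monoid on `n` generators. -/
def permWord (n : ℕ) (σ : Equiv.Perm (Fin n)) : FreeMonoid (Fin n) :=
  ((List.finRange n).map fun i => FreeMonoid.of (σ i)).prod

/-- The defining relations `a_1 a_2 ⋯ a_n = a_{σ(1)} a_{σ(2)} ⋯ a_{σ(n)}`, where `σ` runs
through the cyclic subgroup of `Sym_n` generated by the `n`-cycle `(1,2,…,n)` (i.e. `finRotate n`). -/
def cycRel (n : ℕ) : FreeMonoid (Fin n) → FreeMonoid (Fin n) → Prop :=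
  fun x y => x = permWord n 1 ∧ ∃ k : ℕ, y = permWord n (finRotate n ^ k)

/-- The monoid `S_n` presented by generators `a_1, …, a_n` and the above relations. -/
def Scyc (n : ℕ) : Type := (conGen (cycRel n)).Quotient

instance (n : ℕ) : Monoid (Scyc n) := Con.monoid _

/-- The generator `a_i` of `S_n`. -/
def agen {n : ℕ} (i : Fin n) : Scyc n := (conGen (cycRel n)).mk' (FreeMonoid.of i)

/-- The element `z = a_1 a_2 ⋯ a_n` of `S_n`. -/
def zc (n : ℕ) : Scyc n := ((List.finRange n).map agen).prod


namespace NF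

open Fin.NatCast Fin.CommRing

variable {n : ℕ}

def rotW (n : ℕ) (k : Fin n) : List (Fin n) := (List.finRange n).map (· + k)

@[simp] lemma rotW_length (k : Fin n) : (rotW n k).length = n := by
  simp [rotW]

lemma rotW_getElem [NeZero n] (k : Fin n) (i : ℕ) (h : i < (rotW n k).length) :
    (rotW n k)[i] = (i : Fin n) + k := by
  simp only [rotW, List.getElem_map, List.getElem_finRange]
  congr 1
  ext
  simp [Fin.val_cast_of_lt (by simpa using h)]

def HasRot (n : ℕ) (u : List (Fin n)) : Prop :=
  ∃ p : List (Fin n) × Fin n × List (Fin n), u = p.1 ++ rotW n p.2.1 ++ p.2.2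

lemma hasRot_of (x : List (Fin n)) (k : Fin n) (y : List (Fin n)) :
    HasRot n (x ++ rotW n k ++ y) := ⟨(x, k, y), rfl⟩

open Classical in
noncomputable def reduce (n : ℕ) [NeZero n] : List (Fin n) → List (Fin n) := fun u =>
  if h : HasRot n u then reduce n (h.choose.1 ++ h.choose.2.2) else u
  termination_by u => u.length
  decreasing_by
    have hs := h.choose_spec
    have hn : 0 < n := Nat.pos_of_ne_zero (NeZero.ne n)
    have := congrArg List.length hs
    simp only [List.length_append, rotW_length] at this
    simp only [List.length_append]
    omega

lemma reduce_eq_of_hasRot [NeZero n] {u : List (Fin n)} (h : HasRot n u) :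
    reduce n u = reduce n (h.choose.1 ++ h.choose.2.2) := by
  conv_lhs => rw [reduce]
  rw [dif_pos h]

lemma reduce_eq_self [NeZero n] {u : List (Fin n)} (h : ¬ HasRot n u) :
    reduce n u = u := by
  conv_lhs => rw [reduce]
  rw [dif_neg h]

lemma exists_append_of_le {α : Type*} {a b c d : List α} (h : a ++ b = c ++ d)
    (hl : a.length ≤ c.length) : ∃ e, c = a ++ e ∧ b = e ++ d := by
  rcases List.append_eq_append_iff.1 h with ⟨e, he1, he2⟩ | ⟨e, he1, he2⟩
  · exact ⟨e, he1, he2⟩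
  · have : e.length = 0 := by
      have := congrArg List.length he1
      simp only [List.length_append] at this
      omega
    rw [List.length_eq_zero_iff] at this
    subst this
    exact ⟨[], by simpa using he1.symm, by simpa using he2.symm⟩

lemma rot_split_right [NeZero n] {k : Fin n} {a b : List (Fin n)} (h : rotW n k = a ++ b)
    (i : ℕ) (hi : i < b.length) : b[i] = ((a.length + i : ℕ) : Fin n) + k := by
  have hlen : a.length + b.length = n := by
    have := congrArg List.length h
    simp only [List.length_append, rotW_length] at this
    omega
  have h1 : (rotW n k)[a.length + i]'(by simp; omega) = (a ++ b)[a.length + i]'(by simp; omega) :=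
    List.getElem_of_eq h _
  rw [rotW_getElem, List.getElem_append_right (by omega)] at h1
  simpa using h1.symm

lemma rot_split_left [NeZero n] {k : Fin n} {a b : List (Fin n)} (h : rotW n k = a ++ b)
    (i : ℕ) (hi : i < a.length) : a[i] = ((i : ℕ) : Fin n) + k := by
  have hlen : a.length + b.length = n := by
    have := congrArg List.length h
    simp only [List.length_append, rotW_length] at this
    omega
  have h1 : (rotW n k)[i]'(by simp; omega) = (a ++ b)[i]'(by simp; omega) :=
    List.getElem_of_eq h _
  rw [rotW_getElem, List.getElem_append_left hi] at h1
  exact h1.symm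

lemma overlap_eq [NeZero n] {e f g : List (Fin n)} {k k' : Fin n}
    (h1 : rotW n k = e ++ f) (h2 : rotW n k' = f ++ g) (hf : f ≠ []) : g = e := by
  have hl1 : e.length + f.length = n := by
    have := congrArg List.length h1; simp only [List.length_append, rotW_length] at this; omega
  have hl2 : f.length + g.length = n := by
    have := congrArg List.length h2; simp only [List.length_append, rotW_length] at this; omega
  have hfl : 0 < f.length := List.length_pos_iff.2 hf
  have hglen : g.length = e.length := by omega
  have hk' : k' = (e.length : Fin n) + k := by
    have t1 : f[0]'hfl = ((e.length + 0 : ℕ) : Fin n) + k := rot_split_right h1 0 hfl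
    have t2 : f[0]'hfl = ((0 : ℕ) : Fin n) + k' := rot_split_left h2 0 hfl
    rw [t1] at t2
    simpa using t2.symm
  apply List.ext_getElem (by omega)
  intro i hig hie
  have hgi : g[i] = ((f.length + i : ℕ) : Fin n) + k' := rot_split_right h2 i hig
  have hei : e[i] = ((i : ℕ) : Fin n) + k := rot_split_left h1 i hie
  rw [hgi, hei, hk']
  have : ((f.length + i : ℕ) : Fin n) + ((e.length : ℕ) : Fin n) = ((i : ℕ) : Fin n) := by
    rw [← Nat.cast_add]
    have h3 : f.length + i + e.length = n + i := by omega
    rw [h3, Nat.cast_add, Fin.natCast_self, zero_add]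
  rw [← this]
  ring

lemma twodel [NeZero n] {N : ℕ}
    (IH : ∀ (u : List (Fin n)) x k y, u.length ≤ N → u = x ++ rotW n k ++ y →
      reduce n u = reduce n (x ++ y))
    {x₁ x₂ y₁ y₂ : List (Fin n)} {k₁ k₂ : Fin n}
    (hu : x₁ ++ rotW n k₁ ++ y₁ = x₂ ++ rotW n k₂ ++ y₂)
    (hlu : (x₁ ++ rotW n k₁ ++ y₁).length ≤ N + n)
    (hle : x₁.length ≤ x₂.length) :
    reduce n (x₁ ++ y₁) = reduce n (x₂ ++ y₂) := by
  have hn : 0 < n := Nat.pos_of_ne_zero (NeZero.ne n)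
  rw [List.append_assoc, List.append_assoc] at hu
  obtain ⟨e, he1, he2⟩ := exists_append_of_le hu hle
  rcases Nat.lt_or_ge e.length n with hel | hel
  · rcases Nat.eq_zero_or_pos e.length with he0 | he0
    · rw [List.length_eq_zero_iff] at he0
      subst he0
      simp only [List.append_nil] at he1
      simp only [List.nil_append] at he2
      obtain ⟨h1, h2⟩ := List.append_inj he2 (by simp)
      rw [he1, h2]
    · -- overlap case
      obtain ⟨f, hf1, hf2⟩ := exists_append_of_le he2.symm (by simp; omega)
      have hfn : e.length + f.length = n := by
        have := congrArg List.length hf1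
        simp only [List.length_append, rotW_length] at this
        omega
      obtain ⟨g, hg1, hg2⟩ := exists_append_of_le hf2.symm (by simp; omega)
      have : g = e := overlap_eq hf1 hg1 (by
        intro h
        rw [h] at hfn
        simp at hfn
        omega)
      subst this
      rw [he1, hg2]
      simp [List.append_assoc]
  · -- disjoint case
    obtain ⟨d, hd1, hd2⟩ := exists_append_of_le he2 (by simpa using hel)
    have hx2 : x₂ = x₁ ++ (rotW n k₁ ++ d) := by rw [he1, hd1]
    have len_u := congrArg List.length hu
    simp only [List.length_append, rotW_length] at len_u
    simp only [List.length_append, rotW_length] at hlu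
    have hld : y₁.length = d.length + n + y₂.length := by
      have := congrArg List.length hd2
      simp only [List.length_append, rotW_length] at this
      omega
    have e1 : reduce n (x₁ ++ y₁) = reduce n ((x₁ ++ d) ++ y₂) := by
      apply IH (x₁ ++ y₁) (x₁ ++ d) k₂ y₂
      · simp only [List.length_append]; omega
      · rw [hd2]; simp [List.append_assoc]
    have e2 : reduce n (x₂ ++ y₂) = reduce n (x₁ ++ (d ++ y₂)) := by
      have hrw : x₂ ++ y₂ = x₁ ++ rotW n k₁ ++ (d ++ y₂) := by
        rw [hx2]; simp [List.append_assoc]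
      rw [hrw]
      apply IH _ x₁ k₁ (d ++ y₂)
      · rw [← hrw]
        have := congrArg List.length hx2
        simp only [List.length_append, rotW_length] at this ⊢
        omega
      · rfl
    rw [e1, e2]
    congr 1
    simp [List.append_assoc]

lemma reduce_del_aux [NeZero n] : ∀ N : ℕ, ∀ (u : List (Fin n)) x k y, u.length ≤ N →
    u = x ++ rotW n k ++ y → reduce n u = reduce n (x ++ y) := by
  have hn : 0 < n := Nat.pos_of_ne_zero (NeZero.ne n)
  intro N
  induction N with
  | zero =>
    intro u x k y hl he
    exfalso
    rw [he] at hl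
    simp only [List.length_append, rotW_length] at hl
    omega
  | succ N IH =>
    intro u x k y hl he
    have hr : HasRot n u := he ▸ hasRot_of x k y
    rw [reduce_eq_of_hasRot hr]
    have hspec := hr.choose_spec
    set x₀ := hr.choose.1
    set k₀ := hr.choose.2.1
    set y₀ := hr.choose.2.2
    -- u = x₀ ++ rotW k₀ ++ y₀ and u = x ++ rotW k ++ y
    have hlu : (x ++ rotW n k ++ y).length ≤ (N + 1 - n) + n := by
      rw [← he]
      omega
    have IH' : ∀ (u : List (Fin n)) x k y, u.length ≤ N + 1 - n →
        u = x ++ rotW n k ++ y → reduce n u = reduce n (x ++ y) := by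
      intro u x k y h1 h2
      exact IH u x k y (by omega) h2
    have hlu0 : (x₀ ++ rotW n k₀ ++ y₀).length ≤ N + 1 - n + n := by
      rw [← hspec]; omega
    rcases Nat.le_total x.length x₀.length with hc | hc
    · exact (twodel IH' (by rw [← he, hspec]) hlu hc).symm
    · exact twodel IH' (by rw [← hspec, he]) hlu0 hc

lemma reduce_del [NeZero n] (x : List (Fin n)) (k : Fin n) (y : List (Fin n)) :
    reduce n (x ++ rotW n k ++ y) = reduce n (x ++ y) :=
  reduce_del_aux _ _ x k y le_rfl rfl

lemma reduce_del' [NeZero n] {u : List (Fin n)} {x k y} (h : u = x ++ rotW n k ++ y) :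
    reduce n u = reduce n (x ++ y) := by
  rw [h]; exact reduce_del x k y

lemma npos [NeZero n] : 0 < n := Nat.pos_of_ne_zero (NeZero.ne n)

lemma strong_ind {P : List (Fin n) → Prop}
    (H : ∀ u, (∀ v : List (Fin n), v.length < u.length → P v) → P u) : ∀ u, P u := by
  suffices HN : ∀ N (u : List (Fin n)), u.length ≤ N → P u from fun u => HN u.length u le_rfl
  intro N
  induction N with
  | zero => exact fun u hu => H u (fun v hv => absurd hv (by omega))
  | succ N IH => exact fun u hu => H u (fun v hv => IH v (by omega))

lemma not_hasRot_reduce [NeZero n] : ∀ u : List (Fin n), ¬ HasRot n (reduce n u) := by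
  apply strong_ind
  intro u IH
  by_cases h : HasRot n u
  · rw [reduce_eq_of_hasRot h]
    apply IH
    have hs := congrArg List.length h.choose_spec
    simp only [List.length_append, rotW_length] at hs
    simp only [List.length_append]
    have := npos (n := n)
    omega
  · rwa [reduce_eq_self h]

lemma reduce_length_le [NeZero n] : ∀ u : List (Fin n), (reduce n u).length ≤ u.length := by
  apply strong_ind
  intro u IH
  by_cases h : HasRot n u
  · rw [reduce_eq_of_hasRot h]
    have hs := congrArg List.length h.choose_spec
    simp only [List.length_append, rotW_length] at hs
    have hlt : (h.choose.1 ++ h.choose.2.2).length < u.length := by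
      simp only [List.length_append]
      have := npos (n := n)
      omega
    exact le_trans (IH _ hlt) (le_of_lt hlt)
  · rw [reduce_eq_self h]

lemma reduce_defect [NeZero n] : ∀ u : List (Fin n), ∃ m, u.length = (reduce n u).length + n * m := by
  apply strong_ind
  intro u IH
  by_cases h : HasRot n u
  · rw [reduce_eq_of_hasRot h]
    have hs := congrArg List.length h.choose_spec
    simp only [List.length_append, rotW_length] at hs
    have hlt : (h.choose.1 ++ h.choose.2.2).length < u.length := by
      simp only [List.length_append]
      have := npos (n := n)
      omega
    obtain ⟨m, hm⟩ := IH _ hlt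
    refine ⟨m + 1, ?_⟩
    simp only [List.length_append] at hm hs ⊢
    ring_nf
    omega
  · rw [reduce_eq_self h]
    exact ⟨0, by omega⟩

lemma reduce_reduce [NeZero n] (u : List (Fin n)) : reduce n (reduce n u) = reduce n u :=
  reduce_eq_self (not_hasRot_reduce u)

lemma reduce_length_lt [NeZero n] {u : List (Fin n)} (h : HasRot n u) :
    (reduce n u).length + n ≤ u.length := by
  obtain ⟨⟨x, k, y⟩, hp⟩ := h
  have := reduce_del' hp
  rw [this]
  have h1 := reduce_length_le (n := n) (x ++ y)
  have h2 := congrArg List.length hp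
  simp only [List.length_append, rotW_length] at h1 h2 ⊢
  omega

lemma reduce_congr_mid [NeZero n] : ∀ u x y : List (Fin n),
    reduce n (x ++ u ++ y) = reduce n (x ++ reduce n u ++ y) := by
  apply strong_ind (P := fun u => ∀ x y : List (Fin n),
    reduce n (x ++ u ++ y) = reduce n (x ++ reduce n u ++ y))
  intro u IH x y
  by_cases h : HasRot n u
  · obtain hs := h.choose_spec
    have hred : reduce n u = reduce n (h.choose.1 ++ h.choose.2.2) := reduce_eq_of_hasRot h
    have hlen : (h.choose.1 ++ h.choose.2.2).length < u.length := by
      have := congrArg List.length hs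
      simp only [List.length_append, rotW_length] at this
      simp only [List.length_append]
      have := npos (n := n)
      omega
    have e1 : reduce n (x ++ u ++ y) = reduce n (x ++ (h.choose.1 ++ h.choose.2.2) ++ y) := by
      have : x ++ u ++ y = (x ++ h.choose.1) ++ rotW n h.choose.2.1 ++ (h.choose.2.2 ++ y) := by
        conv_lhs => rw [hs]
        simp [List.append_assoc]
      rw [reduce_del' this]
      congr 1
      simp [List.append_assoc]
    rw [e1, IH _ hlen, hred]
  · rw [reduce_eq_self h]

lemma reduce_congr_left [NeZero n] (u y : List (Fin n)) :
    reduce n (u ++ y) = reduce n (reduce n u ++ y) := by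
  have := reduce_congr_mid (n := n) u [] y
  simpa using this

lemma reduce_congr_right [NeZero n] (x u : List (Fin n)) :
    reduce n (x ++ u) = reduce n (x ++ reduce n u) := by
  have := reduce_congr_mid (n := n) u x []
  simpa using this

/-! ### The congruence bridge -/

def mkw (n : ℕ) (u : List (Fin n)) : Scyc n := (conGen (cycRel n)).mk' (FreeMonoid.ofList u)

lemma mkw_append (u v : List (Fin n)) : mkw n (u ++ v) = mkw n u * mkw n v := by
  unfold mkw
  rw [FreeMonoid.ofList_append, map_mul]
  rfl

lemma prod_map_of {α : Type*} (l : List α) :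
    (l.map FreeMonoid.of).prod = FreeMonoid.ofList l := by
  induction l with
  | nil => rfl
  | cons a t ih => rw [List.map_cons, List.prod_cons, ih]; rfl

lemma permWord_eq (σ : Equiv.Perm (Fin n)) :
    permWord n σ = FreeMonoid.ofList ((List.finRange n).map σ) := by
  unfold permWord
  rw [← prod_map_of, List.map_map]
  rfl

lemma finRotate_pow_apply [NeZero n] (k : ℕ) (i : Fin n) :
    ((finRotate n) ^ k) i = i + (k : Fin n) := by
  obtain ⟨m, rfl⟩ : ∃ m, n = m + 1 := ⟨n - 1, by have := npos (n := n); omega⟩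
  induction k with
  | zero => simp
  | succ k ih =>
    rw [pow_succ', Equiv.Perm.mul_apply, ih, finRotate_succ_apply]
    push_cast
    ring

lemma permWord_rot [NeZero n] (k : ℕ) :
    permWord n ((finRotate n) ^ k) = FreeMonoid.ofList (rotW n (k : Fin n)) := by
  rw [permWord_eq]
  congr 1
  unfold rotW
  exact List.map_congr_left (fun a _ => finRotate_pow_apply k a)

lemma permWord_one [NeZero n] : permWord n 1 = FreeMonoid.ofList (rotW n 0) := by
  have := permWord_rot (n := n) 0
  rw [pow_zero] at this
  rw [this]
  norm_num

lemma mkw_rot [NeZero n] (k : Fin n) : mkw n (rotW n 0) = mkw n (rotW n k) := by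
  have hrel : cycRel n (permWord n 1) (permWord n ((finRotate n) ^ (k : ℕ))) := ⟨rfl, k, rfl⟩
  have h2 : (conGen (cycRel n)) (permWord n 1) (permWord n ((finRotate n) ^ (k : ℕ))) :=
    ConGen.Rel.of _ _ hrel
  have h3 := (Con.eq _).2 h2
  unfold mkw
  rw [← permWord_one, ← Fin.cast_val_eq_self k, ← permWord_rot]
  exact h3

lemma cons_rot [NeZero n] (k : Fin n) : [k] ++ rotW n (k + 1) = rotW n k ++ [k] := by
  have hn : 0 < n := npos
  apply List.ext_getElem (by simp)
  intro i h1 h2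
  simp only [List.length_append, List.length_cons, List.length_nil, rotW_length] at h1
  rcases Nat.eq_zero_or_pos i with rfl | hi
  · rw [List.getElem_append_left (by simp), List.getElem_append_left (by simpa using hn),
        rotW_getElem _ _ (by simpa using hn)]
    simp
  · rcases Nat.lt_or_ge i n with hin | hin
    · rw [List.getElem_append_right (by simp; omega),
          List.getElem_append_left (by simpa using hin),
          rotW_getElem _ _ (by simp; omega),
          rotW_getElem _ _ (by simpa using hin)]
      simp only [List.length_cons, List.length_nil]
      have hc : ((i - 1 : ℕ) : Fin n) + 1 = ((i : ℕ) : Fin n) := by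
        rw [← Nat.cast_one (R := Fin n), ← Nat.cast_add]
        congr 1
        omega
      rw [← hc]
      ring
    · have hieq : i = n := by omega
      rw [List.getElem_append_right (by simp; omega),
          List.getElem_append_right (by simp; omega),
          rotW_getElem _ _ (by simp; omega)]
      simp only [List.length_cons, List.length_nil, rotW_length]
      simp only [List.getElem_singleton, Nat.zero_add]
      have hnn : ((i - 1 : ℕ) : Fin n) + 1 = 0 := by
        rw [← Nat.cast_one (R := Fin n), ← Nat.cast_add]
        have hn1 : i - 1 + 1 = n := by omega
        rw [hn1, Fin.natCast_self]
      calc ((i - 1 : ℕ) : Fin n) + (k + 1) = (((i - 1 : ℕ) : Fin n) + 1) + k := by ring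
        _ = k := by rw [hnn, zero_add]

lemma mkw_letter_z [NeZero n] (c : Fin n) :
    mkw n ([c] ++ rotW n 0) = mkw n (rotW n 0 ++ [c]) := by
  calc mkw n ([c] ++ rotW n 0) = mkw n [c] * mkw n (rotW n 0) := mkw_append _ _
    _ = mkw n [c] * mkw n (rotW n (c + 1)) := by rw [mkw_rot (c + 1)]
    _ = mkw n ([c] ++ rotW n (c + 1)) := (mkw_append _ _).symm
    _ = mkw n (rotW n c ++ [c]) := by rw [cons_rot]
    _ = mkw n (rotW n c) * mkw n [c] := mkw_append _ _
    _ = mkw n (rotW n 0) * mkw n [c] := by rw [← mkw_rot c]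
    _ = mkw n (rotW n 0 ++ [c]) := (mkw_append _ _).symm

lemma mkw_z_comm [NeZero n] (x : List (Fin n)) :
    mkw n (x ++ rotW n 0) = mkw n (rotW n 0 ++ x) := by
  induction x with
  | nil => simp
  | cons c t ih =>
    have h1 : (c :: t) ++ rotW n 0 = [c] ++ (t ++ rotW n 0) := by simp
    rw [h1, mkw_append, ih, ← mkw_append]
    have h2 : [c] ++ (rotW n 0 ++ t) = ([c] ++ rotW n 0) ++ t := by simp
    rw [h2, mkw_append, mkw_letter_z, ← mkw_append]
    congr 1
    simp

lemma mkw_delete [NeZero n] (x : List (Fin n)) (k : Fin n) (y : List (Fin n)) :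
    mkw n (x ++ rotW n k ++ y) = mkw n (rotW n 0 ++ (x ++ y)) := by
  rw [mkw_append, mkw_append, ← mkw_rot k, ← mkw_append, mkw_z_comm, ← mkw_append]
  congr 1
  simp

lemma eq_of_obs [NeZero n] : ∀ u v : List (Fin n), u.length = v.length →
    reduce n u = reduce n v → mkw n u = mkw n v := by
  have hn : 0 < n := npos
  suffices H : ∀ N (u v : List (Fin n)), u.length ≤ N → u.length = v.length →
      reduce n u = reduce n v → mkw n u = mkw n v from
    fun u v h1 h2 => H u.length u v le_rfl h1 h2
  intro N
  induction N with
  | zero =>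
    intro u v hl hlen _
    have hu : u = [] := by rw [← List.length_eq_zero_iff]; omega
    have hv : v = [] := by rw [← List.length_eq_zero_iff]; omega
    rw [hu, hv]
  | succ N IH =>
    intro u v hl hlen hred
    by_cases hu : HasRot n u
    · have hv : HasRot n v := by
        by_contra hv
        have h1 := reduce_eq_self hv
        have h2 := reduce_length_lt hu
        rw [← hred] at h1
        have := congrArg List.length h1
        omega
      obtain ⟨⟨x, k, y⟩, hx⟩ := hu
      obtain ⟨⟨x', k', y'⟩, hx'⟩ := hv
      have d1 : mkw n u = mkw n (rotW n 0 ++ (x ++ y)) := by rw [hx]; exact mkw_delete _ _ _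
      have d2 : mkw n v = mkw n (rotW n 0 ++ (x' ++ y')) := by rw [hx']; exact mkw_delete _ _ _
      have hxl := congrArg List.length hx
      have hxl' := congrArg List.length hx'
      simp only [List.length_append, rotW_length] at hxl hxl'
      have hIH : mkw n (x ++ y) = mkw n (x' ++ y') := by
        apply IH
        · simp only [List.length_append]; omega
        · simp only [List.length_append]; omega
        · rw [← reduce_del' hx, ← reduce_del' hx', hred]
      rw [d1, d2, mkw_append, hIH, ← mkw_append]
    · have hv : ¬ HasRot n v := by
        by_contra hv
        have h1 := reduce_eq_self hu
        have h2 := reduce_length_lt hv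
        rw [hred] at h1
        have := congrArg List.length h1
        omega
      have h1 := reduce_eq_self hu
      have h2 := reduce_eq_self hv
      rw [← h1, ← h2, hred]

def obsCon (n : ℕ) [NeZero n] : Con (FreeMonoid (Fin n)) where
  r a b := (FreeMonoid.toList a).length = (FreeMonoid.toList b).length ∧
           reduce n (FreeMonoid.toList a) = reduce n (FreeMonoid.toList b)
  iseqv := ⟨fun _ => ⟨rfl, rfl⟩, fun h => ⟨h.1.symm, h.2.symm⟩,
    fun h1 h2 => ⟨h1.1.trans h2.1, h1.2.trans h2.2⟩⟩
  mul' := by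
    intro a b c d h1 h2
    constructor
    · simp only [FreeMonoid.toList_mul, List.length_append, h1.1, h2.1]
    · simp only [FreeMonoid.toList_mul]
      rw [reduce_congr_left, h1.2, ← reduce_congr_left,
          reduce_congr_right, h2.2, ← reduce_congr_right]

lemma mkw_eq_iff [NeZero n] {u v : List (Fin n)} :
    mkw n u = mkw n v ↔ (u.length = v.length ∧ reduce n u = reduce n v) := by
  constructor
  · intro h
    have hcon : (conGen (cycRel n)) (FreeMonoid.ofList u) (FreeMonoid.ofList v) :=
      (Con.eq _).1 h
    have hle : conGen (cycRel n) ≤ obsCon n := by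
      apply Con.conGen_le.2
      rintro a b ⟨ha, k, hb⟩
      rw [ha, hb, permWord_one, permWord_rot]
      constructor
      · simp [FreeMonoid.toList_ofList]
      · simp only [FreeMonoid.toList_ofList]
        have e1 : reduce n (rotW n 0) = reduce n ([] : List (Fin n)) := by
          have : rotW n 0 = [] ++ rotW n 0 ++ [] := by simp
          rw [reduce_del' this]
          rfl
        have e2 : reduce n (rotW n ((k : ℕ) : Fin n)) = reduce n ([] : List (Fin n)) := by
          have : rotW n ((k : ℕ) : Fin n) = [] ++ rotW n ((k : ℕ) : Fin n) ++ [] := by simp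
          rw [reduce_del' this]
          rfl
        rw [e1, e2]
    have := hle hcon
    exact this
  · rintro ⟨h1, h2⟩
    exact eq_of_obs u v h1 h2

/-! ### Word structure -/

def wW (n : ℕ) : List (Fin n) := (List.finRange n).drop 1

def wrep (n : ℕ) (j : ℕ) : List (Fin n) := (List.replicate j (wW n)).flatten

@[simp] lemma wW_length : (wW n).length = n - 1 := by simp [wW]

@[simp] lemma wrep_length (j : ℕ) : (wrep n j).length = j * (n - 1) := by
  induction j with
  | zero => simp [wrep]
  | succ j ih =>
    rw [wrep, List.replicate_succ, List.flatten_cons]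
    simp only [List.length_append, wW_length]
    rw [← wrep, ih]
    ring

lemma wrep_succ (j : ℕ) : wrep n (j + 1) = wW n ++ wrep n j := by
  rw [wrep, List.replicate_succ, List.flatten_cons, ← wrep]

lemma head_of_append_eq {α : Type*} {a b : List α} {c : α} {t : List α}
    (h : a ++ b = c :: t) (ha : 0 < a.length) : a[0] = c := by
  cases a with
  | nil => simp at ha
  | cons x xs =>
    simp only [List.cons_append, List.cons.injEq] at h
    simpa using h.1

lemma wW_getElem [NeZero n] (i : ℕ) (h : i < (wW n).length) :
    (wW n)[i] = ((i + 1 : ℕ) : Fin n) := by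
  simp only [wW, List.getElem_drop, List.getElem_finRange]
  simp only [wW_length] at h
  ext
  simp only [Fin.coe_cast, Fin.val_cast_of_lt (show i + 1 < n by omega)]
  omega
lemma rotW_zero_eq [NeZero n] : rotW n 0 = (0 : Fin n) :: wW n := by
  have hn : 0 < n := npos
  have h1 : rotW n 0 = List.finRange n := by
    unfold rotW
    simp
  have h2 : (List.finRange n)[0]'(by simpa using hn) :: (List.finRange n).drop 1 =
      List.finRange n := by
    have := List.getElem_cons_drop (as := List.finRange n) (i := 0) (by simpa using hn)
    simpa using this
  rw [h1, ← h2, wW]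
  congr 1
  rw [List.getElem_finRange]
  ext
  simp

lemma wW_append_zero [NeZero n] (hn2 : 2 ≤ n) : wW n ++ [(0 : Fin n)] = rotW n 1 := by
  apply List.ext_getElem (by simp; omega)
  intro i h1 h2
  simp only [List.length_append, wW_length, List.length_cons, List.length_nil] at h1
  simp only [rotW_length] at h2
  rcases Nat.lt_or_ge i (n - 1) with hin | hin
  · rw [List.getElem_append_left (by simpa using hin), wW_getElem _ (by simpa using hin),
        rotW_getElem _ _ (by simpa using h2)]
    rw [← Nat.cast_one (R := Fin n), ← Nat.cast_add]
  · have hieq : i = n - 1 := by omega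
    rw [List.getElem_append_right (by simp; omega), rotW_getElem _ _ (by simpa using h2)]
    simp only [wW_length, List.getElem_singleton]
    have : ((i : ℕ) : Fin n) + 1 = 0 := by
      rw [← Nat.cast_one (R := Fin n), ← Nat.cast_add]
      have : i + 1 = n := by omega
      rw [this, Fin.natCast_self]
    rw [this]

lemma singleton_prefix_iff {c : Fin n} {v : List (Fin n)} :
    [c] <+: v ↔ ∃ t, v = c :: t := by
  constructor
  · rintro ⟨t, ht⟩
    exact ⟨t, ht.symm⟩
  · rintro ⟨t, rfl⟩
    exact ⟨t, rfl⟩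

lemma one_ne_zero_fin [NeZero n] (hn2 : 2 ≤ n) : ((1 : ℕ) : Fin n) ≠ (0 : Fin n) := by
  intro h
  have h2 := congrArg Fin.val h
  rw [Fin.val_cast_of_lt (by omega)] at h2
  simp at h2

lemma not_zero_prefix_w [NeZero n] (hn2 : 2 ≤ n) (r : List (Fin n)) :
    ¬ [(0 : Fin n)] <+: (wW n ++ r) := by
  rw [singleton_prefix_iff]
  rintro ⟨t, ht⟩
  have h0 := head_of_append_eq ht (by simp; omega)
  rw [wW_getElem _ (by simp; omega)] at h0
  exact one_ne_zero_fin hn2 (by simpa using h0)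

/-- normal words stay normal after prepending `a_1`s. -/
lemma nf_repl [NeZero n] {v : List (Fin n)} (hn2 : 2 ≤ n) (hv : ¬ HasRot n v)
    (hw : ¬ (wW n <+: v)) :
    ∀ i, ¬ HasRot n (List.replicate i (0 : Fin n) ++ v) := by
  have hn : 0 < n := npos
  intro i
  induction i with
  | zero => simpa using hv
  | succ i ih =>
    rintro ⟨⟨x, k, y⟩, hx⟩
    simp only at hx
    match x, hx with
    | [], hx =>
      rw [List.nil_append, List.replicate_succ] at hx
      have hk : k = 0 := by
        have h0 := head_of_append_eq hx.symm (by simpa using hn)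
        rw [rotW_getElem _ _ (by simpa using hn)] at h0
        simpa using h0
      subst hk
      rw [rotW_zero_eq] at hx
      simp only [List.cons_append, List.cons.injEq, true_and] at hx
      cases i with
      | zero =>
        simp only [List.replicate, List.nil_append] at hx
        exact hw ⟨y, hx.symm⟩
      | succ i =>
        rw [List.replicate_succ, List.cons_append] at hx
        have h0 := head_of_append_eq hx.symm (by simp; omega)
        rw [wW_getElem _ (by simp; omega)] at h0
        exact one_ne_zero_fin hn2 (by simpa using h0)
    | c :: x', hx =>
      rw [List.replicate_succ] at hx
      simp only [List.cons_append, List.cons.injEq] at hx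
      exact ih ⟨⟨x', k, y⟩, hx.2⟩

lemma nf_wrep [NeZero n] {v : List (Fin n)} (hn3 : 3 ≤ n) (hv : ¬ HasRot n v)
    (h0 : ¬ ([(0 : Fin n)] <+: v)) (hw : ¬ (wW n <+: v)) :
    ∀ j, ¬ HasRot n (wrep n j ++ v) := by
  have hn : 0 < n := npos
  intro j
  induction j with
  | zero => simpa [wrep] using hv
  | succ j ih =>
    rintro ⟨⟨x, k, y⟩, hx⟩
    simp only at hx
    rw [wrep_succ] at hx
    simp only [List.append_assoc] at hx
    rcases le_or_gt (wW n).length x.length with hle | hlt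
    · obtain ⟨e, he1, he2⟩ := exists_append_of_le hx hle
      exact ih ⟨⟨e, k, y⟩, by rw [he2]; simp [List.append_assoc]⟩
    · obtain ⟨e, he1, he2⟩ := exists_append_of_le hx.symm (le_of_lt hlt)
      have hel : e.length = (n - 1) - x.length := by
        have := congrArg List.length he1
        simp only [List.length_append, wW_length] at this
        omega
      have hepos : 0 < e.length := by simp only [wW_length] at hlt; omega
      obtain ⟨q, hq1, hq2⟩ := exists_append_of_le he2.symm (by simp; omega)
      have hqpos : 0 < q.length := by
        have := congrArg List.length hq1
        simp only [List.length_append, rotW_length] at this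
        simp only [wW_length] at hlt
        omega
      -- k = x.length + 1
      have hk : k = ((x.length + 1 : ℕ) : Fin n) := by
        have t1 : e[0] = ((0 : ℕ) : Fin n) + k := rot_split_left hq1 0 hepos
        have t2 : e[0] = (wW n)[x.length]'(by simp only [wW_length] at hlt ⊢; omega) := by
          have h3 : (wW n)[x.length + 0]'(by simp only [wW_length] at hlt ⊢; omega) = e[0] := by
            rw [List.getElem_of_eq he1 (by simp only [wW_length] at hlt ⊢; omega),
              List.getElem_append_right (by omega)]
            simp
          simpa using h3.symm
        rw [t2, wW_getElem _ (by simp only [wW_length] at hlt ⊢; omega)] at t1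
        rw [Nat.cast_zero, zero_add] at t1
        exact t1.symm
      have hq0 : q[0] = (0 : Fin n) := by
        have := rot_split_right hq1 0 hqpos
        rw [this, hk, ← Nat.cast_add]
        have he2' : e.length + 0 + (x.length + 1) = n := by
          simp only [wW_length] at hlt
          omega
        rw [he2', Fin.natCast_self]
      have hinner0 : (wrep n j ++ v)[0]'(by
          rw [hq2]; simp only [List.length_append]; omega) = (0 : Fin n) := by
        rw [List.getElem_of_eq hq2 (by rw [hq2]; simp only [List.length_append]; omega),
          List.getElem_append_left hqpos, hq0]
      cases j with
      | zero =>
        simp only [wrep, List.replicate_zero, List.flatten_nil, List.nil_append] at hinner0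
        apply h0
        rw [singleton_prefix_iff]
        cases v with
        | nil =>
          exfalso
          have := congrArg List.length hq2
          simp only [wrep, List.replicate_zero, List.flatten_nil, List.nil_append,
            List.length_append, List.length_nil] at this
          omega
        | cons a t =>
          simp only [List.getElem_cons_zero] at hinner0
          exact ⟨t, by rw [hinner0]⟩
      | succ j =>
        have hrw : (wrep n (j+1) ++ v)[0]'(by
            rw [hq2]; simp only [List.length_append]; omega) =
            (wW n ++ (wrep n j ++ v))[0]'(by simp only [List.length_append, wW_length]; omega) := by
          apply List.getElem_of_eq
          rw [wrep_succ]
          simp [List.append_assoc]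
        rw [hrw, List.getElem_append_left (by simp only [wW_length]; omega),
          wW_getElem 0 (by simp only [wW_length]; omega)] at hinner0
        exact one_ne_zero_fin (n := n) (by omega) (by simpa using hinner0)

lemma reduce_quad [NeZero n] {v : List (Fin n)} (hn3 : 3 ≤ n) (hv : ¬ HasRot n v)
    (h0 : ¬ ([(0 : Fin n)] <+: v)) (hw : ¬ (wW n <+: v)) :
    ∀ i j, reduce n (List.replicate i (0 : Fin n) ++ (wrep n j ++ v)) =
      List.replicate (i - min i j) (0 : Fin n) ++ (wrep n (j - min i j) ++ v) := by
  intro i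
  induction i with
  | zero =>
    intro j
    have h1 : 0 - min 0 j = 0 := by omega
    have h2 : j - min 0 j = j := by omega
    rw [h1, h2]
    simp only [List.replicate_zero, List.nil_append]
    rw [reduce_eq_self (nf_wrep hn3 hv h0 hw j)]
  | succ i ih =>
    intro j
    cases j with
    | zero =>
      simp only [wrep, List.replicate_zero, List.flatten_nil, List.nil_append, Nat.min_zero,
        Nat.sub_zero]
      rw [reduce_eq_self (nf_repl (by omega) hv hw (i+1))]
    | succ j =>
      have hrw : List.replicate (i+1) (0 : Fin n) ++ (wrep n (j+1) ++ v) =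
          List.replicate i (0 : Fin n) ++ rotW n 0 ++ (wrep n j ++ v) := by
        rw [List.replicate_succ', wrep_succ, rotW_zero_eq]
        simp [List.append_assoc]
      rw [hrw, reduce_del, ih j,
        show i + 1 - min (i+1) (j+1) = i - min i j by omega,
        show j + 1 - min (i+1) (j+1) = j - min i j by omega]

lemma repl_cancel {c : Fin n} : ∀ i i' (a b : List (Fin n)), ¬ ([c] <+: a) → ¬ ([c] <+: b) →
    List.replicate i c ++ a = List.replicate i' c ++ b → i = i' ∧ a = b := by
  intro i
  induction i with
  | zero =>
    intro i' a b ha hb h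
    cases i' with
    | zero => simpa using h
    | succ i' =>
      exfalso
      apply ha
      rw [singleton_prefix_iff]
      rw [List.replicate_succ] at h
      exact ⟨_, by simpa using h⟩
  | succ i ih =>
    intro i' a b ha hb h
    cases i' with
    | zero =>
      exfalso
      apply hb
      rw [singleton_prefix_iff]
      rw [List.replicate_succ] at h
      exact ⟨_, by simpa using h.symm⟩
    | succ i' =>
      rw [List.replicate_succ, List.replicate_succ] at h
      simp only [List.cons_append, List.cons.injEq, true_and] at h
      obtain ⟨h1, h2⟩ := ih i' a b ha hb h
      exact ⟨by omega, h2⟩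

lemma wrep_cancel (hn2 : 2 ≤ n) : ∀ j j' (a b : List (Fin n)), ¬ (wW n <+: a) → ¬ (wW n <+: b) →
    wrep n j ++ a = wrep n j' ++ b → j = j' ∧ a = b := by
  intro j
  induction j with
  | zero =>
    intro j' a b ha hb h
    cases j' with
    | zero => simpa [wrep] using h
    | succ j' =>
      exfalso
      apply ha
      rw [wrep_succ] at h
      simp only [wrep, List.replicate_zero, List.flatten_nil, List.nil_append] at h
      refine ⟨(List.replicate j' (wW n)).flatten ++ b, ?_⟩
      rw [h]
      simp [List.append_assoc, wrep]
  | succ j ih =>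
    intro j' a b ha hb h
    cases j' with
    | zero =>
      exfalso
      apply hb
      rw [wrep_succ] at h
      simp only [wrep, List.replicate_zero, List.flatten_nil, List.nil_append] at h
      refine ⟨(List.replicate j (wW n)).flatten ++ a, ?_⟩
      rw [← h]
      simp [List.append_assoc, wrep]
    | succ j' =>
      rw [wrep_succ, wrep_succ] at h
      simp only [List.append_assoc] at h
      have h2 := List.append_cancel_left h
      obtain ⟨e1, e2⟩ := ih j' a b ha hb h2
      exact ⟨by omega, e2⟩

lemma not_zero_prefix_inner [NeZero n] (hn2 : 2 ≤ n) {v : List (Fin n)} (j : ℕ)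
    (h0 : ¬ ([(0 : Fin n)] <+: v)) : ¬ ([(0 : Fin n)] <+: (wrep n j ++ v)) := by
  cases j with
  | zero => simpa [wrep] using h0
  | succ j =>
    rw [wrep_succ]
    intro h
    apply not_zero_prefix_w hn2 (wrep n j ++ v)
    simpa [List.append_assoc] using h

lemma recover [NeZero n] (hn3 : 3 ≤ n) {i i' j j' : ℕ} {v v' : List (Fin n)}
    (hij : i = 0 ∨ j = 0) (hij' : i' = 0 ∨ j' = 0)
    (h0 : ¬ ([(0 : Fin n)] <+: v)) (hw : ¬ (wW n <+: v))
    (h0' : ¬ ([(0 : Fin n)] <+: v')) (hw' : ¬ (wW n <+: v'))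
    (h : List.replicate i (0 : Fin n) ++ (wrep n j ++ v) =
         List.replicate i' (0 : Fin n) ++ (wrep n j' ++ v')) :
    i = i' ∧ j = j' ∧ v = v' := by
  obtain ⟨e1, e2⟩ := repl_cancel i i' _ _ (not_zero_prefix_inner (by omega) j h0)
    (not_zero_prefix_inner (by omega) j' h0') h
  obtain ⟨e3, e4⟩ := wrep_cancel (by omega) j j' v v' hw hw' e2
  exact ⟨e1, e3, e4⟩

lemma mkw_one : mkw n [] = 1 := rfl

lemma mkw_pow (l : List (Fin n)) (j : ℕ) :
    mkw n l ^ j = mkw n ((List.replicate j l).flatten) := by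
  induction j with
  | zero => simp [mkw_one]
  | succ j ih =>
    rw [pow_succ', List.replicate_succ, List.flatten_cons, mkw_append, ih]

lemma dvd_iff_prefix [NeZero n] {v g : List (Fin n)} (hv : ¬ HasRot n v) :
    (∃ s : Scyc n, mkw n v = mkw n g * s) ↔ g <+: v := by
  have hn : 0 < n := npos
  constructor
  · rintro ⟨s, hs⟩
    obtain ⟨f, rfl⟩ := Con.mk'_surjective (c := conGen (cycRel n)) s
    have hmk : mkw n v = mkw n (g ++ FreeMonoid.toList f) := by
      have hf : mkw n (FreeMonoid.toList f) = (conGen (cycRel n)).mk' f := by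
        unfold mkw
        rw [FreeMonoid.ofList_toList]
      rw [mkw_append, hf, hs]
    rw [mkw_eq_iff] at hmk
    obtain ⟨hl, hr⟩ := hmk
    have hcr : reduce n (g ++ FreeMonoid.toList f) =
        reduce n (g ++ reduce n (FreeMonoid.toList f)) := reduce_congr_right _ _
    set t := reduce n (FreeMonoid.toList f) with ht
    have htle : t.length ≤ (FreeMonoid.toList f).length := reduce_length_le _
    rw [reduce_eq_self hv] at hr
    by_cases hrot : HasRot n (g ++ t)
    · exfalso
      have h1 := reduce_length_lt hrot
      have h2 := congrArg List.length (hr.trans (hcr.trans rfl))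
      rw [← hcr, ← hr] at h1
      simp only [List.length_append] at h1 hl
      omega
    · have : v = g ++ t := by rw [hr, hcr, reduce_eq_self hrot]
      exact ⟨t, this.symm⟩
  · rintro ⟨t, rfl⟩
    exact ⟨mkw n t, mkw_append _ _⟩

lemma decomp [NeZero n] (hn3 : 3 ≤ n) : ∀ v₀ : List (Fin n), ¬ HasRot n v₀ →
    ∃ i j v, v₀ = List.replicate i (0 : Fin n) ++ (wrep n j ++ v) ∧ (i = 0 ∨ j = 0) ∧
      ¬ HasRot n v ∧ ¬ ([(0 : Fin n)] <+: v) ∧ ¬ (wW n <+: v) := by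
  apply strong_ind
  intro v₀ IH hnf
  by_cases hz : [(0 : Fin n)] <+: v₀
  · obtain ⟨t, rfl⟩ := singleton_prefix_iff.1 hz
    have hnt : ¬ HasRot n t := by
      rintro ⟨⟨x, k, y⟩, hx⟩
      exact hnf ⟨⟨(0 : Fin n) :: x, k, y⟩, by rw [hx]; simp⟩
    obtain ⟨i, j, v, heq, hij, h1, h2, h3⟩ := IH t (by simp) hnt
    have hj : j = 0 := by
      by_contra hj
      have hi : i = 0 := hij.resolve_right hj
      subst hi
      obtain ⟨j', rfl⟩ : ∃ j', j = j' + 1 := ⟨j - 1, by omega⟩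
      apply hnf
      refine ⟨⟨[], 0, wrep n j' ++ v⟩, ?_⟩
      simp only [List.nil_append]
      rw [rotW_zero_eq, heq, wrep_succ]
      simp [List.append_assoc]
    subst hj
    refine ⟨i + 1, 0, v, ?_, Or.inr rfl, h1, h2, h3⟩
    rw [List.replicate_succ]
    simp only [List.cons_append, List.cons.injEq, true_and]
    exact heq
  · by_cases hw : wW n <+: v₀
    · obtain ⟨t, ht⟩ := hw
      have hnt : ¬ HasRot n t := by
        rintro ⟨⟨x, k, y⟩, hx⟩
        exact hnf ⟨⟨wW n ++ x, k, y⟩, by rw [← ht, hx]; simp [List.append_assoc]⟩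
      have hlt : t.length < v₀.length := by
        have := congrArg List.length ht
        simp only [List.length_append, wW_length] at this
        omega
      obtain ⟨i, j, v, heq, hij, h1, h2, h3⟩ := IH t hlt hnt
      have hi : i = 0 := by
        by_contra hi
        obtain ⟨i', rfl⟩ : ∃ i', i = i' + 1 := ⟨i - 1, by omega⟩
        apply hnf
        refine ⟨⟨[], 1, List.replicate i' (0 : Fin n) ++ (wrep n j ++ v)⟩, ?_⟩
        simp only [List.nil_append]
        rw [← wW_append_zero (by omega), ← ht, heq, List.replicate_succ]
        simp [List.append_assoc]
      subst hi
      refine ⟨0, j + 1, v, ?_, Or.inl rfl, h1, h2, h3⟩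
      simp only [List.replicate, List.nil_append] at heq ⊢
      rw [← ht, heq, wrep_succ]
      simp [List.append_assoc]
    · exact ⟨0, 0, v₀, by simp [wrep], Or.inl rfl, hnf, hz, hw⟩

/-! ### Bridge to `Scyc` and quantitative lemmas -/

lemma rotW_zero_finRange [NeZero n] : rotW n 0 = List.finRange n := by
  unfold rotW
  simp

def zrep (n : ℕ) [NeZero n] (e : ℕ) : List (Fin n) := (List.replicate e (rotW n 0)).flatten

@[simp] lemma zrep_length [NeZero n] (e : ℕ) : (zrep n e).length = e * n := by
  induction e with
  | zero => simp [zrep]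
  | succ e ih =>
    rw [zrep, List.replicate_succ, List.flatten_cons]
    simp only [List.length_append, rotW_length]
    rw [← zrep, ih]
    ring

lemma zrep_one [NeZero n] : zrep n 1 = rotW n 0 := by
  simp [zrep]

lemma flatten_rep_singleton (c : Fin n) (i : ℕ) :
    (List.replicate i [c]).flatten = List.replicate i c := by
  induction i with
  | zero => simp
  | succ i ih => rw [List.replicate_succ, List.flatten_cons, ih, List.replicate_succ]; rfl

lemma agen_eq [NeZero n] (i : Fin n) : agen i = mkw n [i] := rfl

lemma mkw_toList [NeZero n] (f : FreeMonoid (Fin n)) :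
    mkw n (FreeMonoid.toList f) = (conGen (cycRel n)).mk' f := by
  unfold mkw
  rw [FreeMonoid.ofList_toList]

lemma prod_map_agen [NeZero n] : ∀ l : List (Fin n), (l.map agen).prod = mkw n l := by
  intro l
  induction l with
  | nil => rfl
  | cons c t ih =>
    rw [List.map_cons, List.prod_cons, ih, agen_eq, ← mkw_append]
    rfl

lemma zc_eq [NeZero n] : zc n = mkw n (rotW n 0) := by
  rw [zc, prod_map_agen, rotW_zero_finRange]

lemma wprod_eq [NeZero n] : (((List.finRange n).drop 1).map agen).prod = mkw n (wW n) := by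
  rw [prod_map_agen]
  rfl

/-- The canonical word of a quadruple. -/
def quadW (n : ℕ) [NeZero n] (i e j : ℕ) (v : List (Fin n)) : List (Fin n) :=
  List.replicate i (0 : Fin n) ++ (zrep n e ++ (wrep n j ++ v))

lemma expr_eq [NeZero n] (i e j : ℕ) (v : List (Fin n)) :
    agen (0 : Fin n) ^ i * zc n ^ e * (((List.finRange n).drop 1).map agen).prod ^ j * mkw n v =
      mkw n (quadW n i e j v) := by
  rw [agen_eq, zc_eq, wprod_eq, mkw_pow, mkw_pow, mkw_pow, flatten_rep_singleton,
    ← mkw_append, ← mkw_append, ← mkw_append]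
  unfold quadW zrep wrep
  congr 1
  simp [List.append_assoc]

lemma quadW_length [NeZero n] (i e j : ℕ) (v : List (Fin n)) :
    (quadW n i e j v).length = i + e * n + j * (n - 1) + v.length := by
  unfold quadW
  simp only [List.length_append, List.length_replicate, zrep_length, wrep_length]
  ring

lemma quadW_reduce [NeZero n] (hn3 : 3 ≤ n) {v : List (Fin n)} (hv : ¬ HasRot n v)
    (h0 : ¬ ([(0 : Fin n)] <+: v)) (hw : ¬ (wW n <+: v)) (i e j : ℕ) (he : e ≤ 1)
    (hside : 1 ≤ j → e = 1 ∨ i = 0) :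
    reduce n (quadW n i e j v) =
      List.replicate (i - e * min i j) (0 : Fin n) ++ (wrep n (j - e * min i j) ++ v) := by
  rcases Nat.le_one_iff_eq_zero_or_eq_one.1 he with rfl | rfl
  · have hm : min i j = 0 := by
      rcases Nat.eq_zero_or_pos j with h | h
      · omega
      · rcases hside h with h' | h'
        · omega
        · omega
    unfold quadW
    simp only [zrep, List.replicate_zero, List.flatten_nil, List.nil_append]
    rw [reduce_quad hn3 hv h0 hw i j, hm]
  · unfold quadW
    rw [zrep_one]
    have hrw : List.replicate i (0 : Fin n) ++ (rotW n 0 ++ (wrep n j ++ v)) =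
        List.replicate i (0 : Fin n) ++ rotW n 0 ++ (wrep n j ++ v) := by
      simp [List.append_assoc]
    rw [hrw, reduce_del, reduce_quad hn3 hv h0 hw i j]
    simp

lemma quad_inj [NeZero n] (hn3 : 3 ≤ n) {i e j i' e' j' : ℕ} {v v' : List (Fin n)}
    (he : e ≤ 1) (he' : e' ≤ 1)
    (hs : 1 ≤ j → e = 1 ∨ i = 0) (hs' : 1 ≤ j' → e' = 1 ∨ i' = 0)
    (hv : ¬ HasRot n v) (h0 : ¬ ([(0 : Fin n)] <+: v)) (hw : ¬ (wW n <+: v))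
    (hv' : ¬ HasRot n v') (h0' : ¬ ([(0 : Fin n)] <+: v')) (hw' : ¬ (wW n <+: v'))
    (hL : (quadW n i e j v).length = (quadW n i' e' j' v').length)
    (hR : reduce n (quadW n i e j v) = reduce n (quadW n i' e' j' v')) :
    i = i' ∧ e = e' ∧ j = j' ∧ v = v' := by
  rw [quadW_reduce hn3 hv h0 hw i e j he hs, quadW_reduce hn3 hv' h0' hw' i' e' j' he' hs'] at hR
  have hcond : i - e * min i j = 0 ∨ j - e * min i j = 0 := by
    rcases Nat.le_one_iff_eq_zero_or_eq_one.1 he with rfl | rfl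
    · rcases Nat.eq_zero_or_pos j with h | h
      · omega
      · rcases hs h with h' | h'
        · omega
        · omega
    · omega
  have hcond' : i' - e' * min i' j' = 0 ∨ j' - e' * min i' j' = 0 := by
    rcases Nat.le_one_iff_eq_zero_or_eq_one.1 he' with rfl | rfl
    · rcases Nat.eq_zero_or_pos j' with h | h
      · omega
      · rcases hs' h with h' | h'
        · omega
        · omega
    · omega
  obtain ⟨hA, hB, hV⟩ := recover hn3 hcond hcond' h0 hw h0' hw' hR
  rw [quadW_length, quadW_length, hV] at hL
  have hsub : ∀ x y : ℕ, (x + y) * (n - 1) = x * (n - 1) + y * (n - 1) :=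
    fun x y => Nat.add_mul x y _
  have hmul : ∀ x : ℕ, x * n = x + x * (n - 1) := by
    intro x
    have h1 : n - 1 + 1 = n := by omega
    calc x * n = x * (n - 1 + 1) := by rw [h1]
      _ = x * (n - 1) + x := Nat.mul_succ x (n - 1)
      _ = x + x * (n - 1) := by ring
  rcases Nat.le_one_iff_eq_zero_or_eq_one.1 he with rfl | rfl <;>
    rcases Nat.le_one_iff_eq_zero_or_eq_one.1 he' with rfl | rfl
  · exact ⟨by omega, rfl, by omega, hV⟩
  · -- e = 0, e' = 1 : contradiction
    exfalso
    have hm1' : min i' j' ≤ i' := Nat.min_le_left _ _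
    have hm2' : min i' j' ≤ j' := Nat.min_le_right _ _
    set m' := min i' j' with hm'def
    obtain ⟨a', ha'⟩ : ∃ a', i' = a' + m' := ⟨i' - m', by omega⟩
    obtain ⟨b', hb'⟩ : ∃ b', j' = b' + m' := ⟨j' - m', by omega⟩
    have hii : i = a' := by omega
    have hjj : j = b' := by omega
    rw [hii, hjj, ha', hb', hsub b' m'] at hL
    linarith [Nat.zero_le (m' * (n - 1))]
  · -- e = 1, e' = 0 : contradiction
    exfalso
    have hm1 : min i j ≤ i := Nat.min_le_left _ _
    have hm2 : min i j ≤ j := Nat.min_le_right _ _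
    set m := min i j with hmdef
    obtain ⟨a, ha⟩ : ∃ a, i = a + m := ⟨i - m, by omega⟩
    obtain ⟨b, hb⟩ : ∃ b, j = b + m := ⟨j - m, by omega⟩
    have hii : i' = a := by omega
    have hjj : j' = b := by omega
    rw [hii, hjj, ha, hb, hsub b m] at hL
    linarith [Nat.zero_le (m * (n - 1))]
  · -- e = e' = 1
    have hm1 : min i j ≤ i := Nat.min_le_left _ _
    have hm2 : min i j ≤ j := Nat.min_le_right _ _
    have hm1' : min i' j' ≤ i' := Nat.min_le_left _ _
    have hm2' : min i' j' ≤ j' := Nat.min_le_right _ _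
    set m := min i j with hmdef
    set m' := min i' j' with hm'def
    obtain ⟨a, ha⟩ : ∃ a, i = a + m := ⟨i - m, by omega⟩
    obtain ⟨b, hb⟩ : ∃ b, j = b + m := ⟨j - m, by omega⟩
    obtain ⟨a', ha'⟩ : ∃ a', i' = a' + m' := ⟨i' - m', by omega⟩
    obtain ⟨b', hb'⟩ : ∃ b', j' = b' + m' := ⟨j' - m', by omega⟩
    have haa : a = a' := by omega
    have hbb : b = b' := by omega
    rw [ha, hb, ha', hb', hsub b m, hsub b' m', haa, hbb] at hL
    have h4 : m + m * (n - 1) = m' + m' * (n - 1) := by linarith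
    have h5 : m * n = m' * n := by rw [hmul m, hmul m', h4]
    have hkey : m = m' := Nat.eq_of_mul_eq_mul_right (by omega) h5
    exact ⟨by omega, rfl, by omega, hV⟩

end NF

open NF in
/-- normal form. Every element `a ∈ S_n` can be written uniquely as
`a = a_1^i (a_1 a_2 ⋯ a_n)^ε (a_2 ⋯ a_n)^j b` with `ε ∈ {0,1}`,
`b ∈ S_n \ (a_1 S_n ∪ (a_2⋯a_n) S_n)`, `i, j ≥ 0` and `(j ≥ 1 → ε = 1 ∨ i = 0)`.
Here the quadruple `p = (i, ε, j, b)`. -/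
theorem normal_form (n : ℕ) (hn : 3 ≤ n) (a : Scyc n) :
    ∃! p : ℕ × ℕ × ℕ × Scyc n,
      p.2.1 ≤ 1 ∧
      a = agen (⟨0, by omega⟩ : Fin n) ^ p.1 * zc n ^ p.2.1 *
            ((((List.finRange n).drop 1).map agen).prod) ^ p.2.2.1 * p.2.2.2 ∧
      (¬ ∃ s : Scyc n, p.2.2.2 = agen (⟨0, by omega⟩ : Fin n) * s) ∧
      (¬ ∃ s : Scyc n, p.2.2.2 = (((List.finRange n).drop 1).map agen).prod * s) ∧
      (1 ≤ p.2.2.1 → p.2.1 = 1 ∨ p.1 = 0) := by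
  haveI : NeZero n := ⟨by omega⟩
  have hz0 : (⟨0, by omega⟩ : Fin n) = (0 : Fin n) := by
    ext
    simp
  rw [hz0]
  obtain ⟨f₀, ha₀⟩ := Con.mk'_surjective (c := conGen (cycRel n)) a
  set u₀ := FreeMonoid.toList f₀ with hu₀
  have ha : a = mkw n u₀ := by rw [← ha₀, mkw_toList]
  set R := reduce n u₀ with hRdef
  have hnfR : ¬ HasRot n R := not_hasRot_reduce u₀
  obtain ⟨m, hm⟩ := reduce_defect (n := n) u₀
  rw [← hRdef] at hm
  obtain ⟨i₀, j₀, v, hRdec, hij₀, hnfv, h0v, hwv⟩ := decomp hn R hnfR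
  have hmin0 : min i₀ j₀ = 0 := by rcases hij₀ with h | h <;> omega
  have hRlen : R.length = i₀ + j₀ * (n - 1) + v.length := by
    rw [hRdec]
    simp only [List.length_append, List.length_replicate, wrep_length]
    ring
  -- choice of the normal-form exponents
  obtain ⟨I, E, J, hIEJ⟩ : ∃ I E J : ℕ,
      (E ≤ 1) ∧ (1 ≤ J → E = 1 ∨ I = 0) ∧
      (I - E * min I J = i₀) ∧ (J - E * min I J = j₀) ∧
      (I + E * n + J * (n - 1) + v.length = u₀.length) := by
    rcases m with _ | m'
    · refine ⟨i₀, 0, j₀, by omega, by intro h; rcases hij₀ with h' | h' <;> omega,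
        by omega, by omega, ?_⟩
      have h2 : u₀.length = R.length := by omega
      rw [h2, hRlen]
      ring
    · have hminI : min (i₀ + m') (j₀ + m') = m' := by omega
      refine ⟨i₀ + m', 1, j₀ + m', le_rfl, fun _ => Or.inl rfl, by omega, by omega, ?_⟩
      have hexp : (j₀ + m') * (n - 1) = j₀ * (n - 1) + m' * (n - 1) := Nat.add_mul _ _ _
      have hexp2 : n * (m' + 1) = n * m' + n := Nat.mul_succ n m'
      have hmul : m' * n = m' + m' * (n - 1) := by
        have h1 : n - 1 + 1 = n := by omega
        calc m' * n = m' * (n - 1 + 1) := by rw [h1]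
          _ = m' * (n - 1) + m' := Nat.mul_succ m' (n - 1)
          _ = m' + m' * (n - 1) := by ring
      have hcomm : m' * n = n * m' := Nat.mul_comm _ _
      linarith [hm, hRlen]
  obtain ⟨hE1, hside, hIsub, hJsub, hlen⟩ := hIEJ
  have hredW : reduce n (quadW n I E J v) = R := by
    rw [quadW_reduce hn hnfv h0v hwv I E J hE1 hside, hIsub, hJsub, hRdec]
  have hlenW : (quadW n I E J v).length = u₀.length := by
    rw [quadW_length]
    exact hlen
  have heqn : a = mkw n (quadW n I E J v) := by
    rw [ha, mkw_eq_iff]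
    exact ⟨hlenW.symm, by rw [hredW]⟩
  refine ⟨⟨I, E, J, mkw n v⟩, ⟨hE1, ?_, ?_, ?_, ?_⟩, ?_⟩
  · -- the equation
    dsimp only
    rw [expr_eq I E J v]
    exact heqn
  · -- not divisible by a₁
    dsimp only
    rintro ⟨s, hs⟩
    rw [agen_eq] at hs
    exact h0v ((dvd_iff_prefix hnfv).1 ⟨s, hs⟩)
  · -- not divisible by w
    dsimp only
    rintro ⟨s, hs⟩
    rw [wprod_eq] at hs
    exact hwv ((dvd_iff_prefix hnfv).1 ⟨s, hs⟩)
  · -- side condition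
    dsimp only
    exact fun h => hside h
  · -- uniqueness
    rintro ⟨i, e, j, b⟩ ⟨hpe, hpeq, hp3, hp4, hp5⟩
    dsimp only at hpe hpeq hp3 hp4 hp5
    obtain ⟨f, hbf⟩ := Con.mk'_surjective (c := conGen (cycRel n)) b
    set ub := FreeMonoid.toList f with hubdef
    have hb : b = mkw n ub := by rw [← hbf, mkw_toList]
    -- b is represented by a normal word
    have hnfb : ¬ HasRot n ub := by
      rintro ⟨⟨x, k, y⟩, hx⟩
      apply hp3
      refine ⟨mkw n (wW n ++ (x ++ y)), ?_⟩
      rw [hb, agen_eq, ← mkw_append]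
      have h1 : mkw n ub = mkw n (x ++ rotW n k ++ y) := by rw [← hx]
      rw [h1, mkw_delete]
      congr 1
      rw [rotW_zero_eq]
      simp
    have h0b : ¬ ([(0 : Fin n)] <+: ub) := by
      intro hp
      obtain ⟨s, hs⟩ := (dvd_iff_prefix hnfb).2 hp
      exact hp3 ⟨s, by rw [hb, hs, agen_eq]⟩
    have hwb : ¬ (wW n <+: ub) := by
      intro hp
      obtain ⟨s, hs⟩ := (dvd_iff_prefix hnfb).2 hp
      exact hp4 ⟨s, by rw [hb, hs, wprod_eq]⟩
    -- compare observables
    rw [hb, expr_eq i e j ub, ha, mkw_eq_iff] at hpeq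
    obtain ⟨hL1, hR1⟩ := hpeq
    have hLL : (quadW n i e j ub).length = (quadW n I E J v).length := by
      rw [hlenW, ← hL1]
    have hRR : reduce n (quadW n i e j ub) = reduce n (quadW n I E J v) := by
      rw [hredW, ← hR1]
    obtain ⟨q1, q2, q3, q4⟩ :=
      quad_inj hn hpe hE1 hp5 hside hnfb h0b hwb hnfv h0v hwv hLL hRR
    simp only [Prod.mk.injEq]
    exact ⟨q1, q2, q3, by rw [hb, q4]⟩
end

section
/- Let n ≥ 3 and let S_n be the monoid presented by generators a_1, …, a_n and relations a_1 a_2 ⋯ a_n = a_{σ(1)} ⋯ a_{σ(n)} for σ in the cyclic group generated by the n-cycle. Then S_n is cancellative: for all x, y, s ∈ S_n, if s·x = s·y then x = y, and if x·s = y·s then x = y. -/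
namespace CancelAux
open Fin.CommRing
set_option linter.unusedSectionVars false

variable {n : ℕ} [NeZero n]

def consec : Fin n → ℕ → List (Fin n)
  | _, 0 => []
  | s, (m+1) => s :: consec (s+1) m

@[simp] lemma consec_zero (s : Fin n) : consec s 0 = [] := rfl
@[simp] lemma consec_succ (s : Fin n) (m : ℕ) : consec s (m+1) = s :: consec (s+1) m := rfl
@[simp] lemma consec_one (s : Fin n) : consec s 1 = [s] := rfl

@[simp] lemma consec_length (s : Fin n) (L : ℕ) : (consec s L).length = L := by
  induction L generalizing s with
  | zero => rfl
  | succ L ih => simp [consec, ih]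

lemma consec_append (s : Fin n) (a b : ℕ) :
    consec s (a + b) = consec s a ++ consec (s + (a : Fin n)) b := by
  induction a generalizing s with
  | zero => simp
  | succ a ih =>
    have h1 : a + 1 + b = (a + b) + 1 := by omega
    rw [h1]
    simp only [consec_succ, ih (s+1)]
    have : s + 1 + (a : Fin n) = s + ((a+1 : ℕ) : Fin n) := by push_cast; ring
    rw [this]
    simp

lemma consec_snoc (s : Fin n) (L : ℕ) :
    consec s (L + 1) = consec s L ++ [s + (L : Fin n)] := by
  rw [consec_append s L 1]; simp

lemma consec_cons_sub (s : Fin n) {L : ℕ} (h : 1 ≤ L) :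
    consec s L = s :: consec (s+1) (L-1) := by
  obtain ⟨K, rfl⟩ : ∃ K, L = K + 1 := ⟨L - 1, by omega⟩
  simp

lemma consec_snoc_sub (s : Fin n) {L : ℕ} (h : 1 ≤ L) :
    consec s L = consec s (L-1) ++ [s + ((L-1 : ℕ) : Fin n)] := by
  obtain ⟨K, rfl⟩ : ∃ K, L = K + 1 := ⟨L - 1, by omega⟩
  simpa using consec_snoc s K

lemma consec_prefix_consec (s : Fin n) {a b : ℕ} (h : a ≤ b) :
    consec s a <+: consec s b := by
  obtain ⟨c, rfl⟩ := Nat.exists_eq_add_of_le h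
  rw [consec_append]; exact List.prefix_append _ _

def NoRot (u : List (Fin n)) : Prop := ∀ s : Fin n, ¬ consec s n <:+: u

lemma noRot_nil : NoRot ([] : List (Fin n)) := by
  intro s h
  have := h.length_le
  simp at this
  have := NeZero.pos n
  omega

lemma NoRot.of_infix {u v : List (Fin n)} (h : NoRot v) (huv : u <:+: v) : NoRot u :=
  fun s hs => h s (hs.trans huv)

lemma NoRot.not_long_prefix {u : List (Fin n)} (h : NoRot u) {s : Fin n} {L : ℕ}
    (hL : n ≤ L) (hp : consec s L <+: u) : False :=
  h s (((consec_prefix_consec s hL).trans hp).isInfix)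

def step (i : Fin n) (p : ℕ × List (Fin n)) : ℕ × List (Fin n) :=
  if consec (i+1) (n-1) <+: p.2 then (p.1 + 1, p.2.drop (n-1)) else (p.1, i :: p.2)

def run (w : List (Fin n)) (p : ℕ × List (Fin n)) : ℕ × List (Fin n) := w.foldr step p

@[simp] lemma run_nil (p : ℕ × List (Fin n)) : run [] p = p := rfl
@[simp] lemma run_cons (i : Fin n) (w : List (Fin n)) (p) :
    run (i :: w) p = step i (run w p) := rfl
lemma run_append (x y : List (Fin n)) (p) : run (x ++ y) p = run x (run y p) :=
  List.foldr_append ..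

def nf (w : List (Fin n)) : ℕ × List (Fin n) := run w (0, [])

lemma noRot_step (i : Fin n) (hn : 1 ≤ n) {p : ℕ × List (Fin n)} (hp : NoRot p.2) :
    NoRot (step i p).2 := by
  unfold step
  split
  · exact hp.of_infix (p.2.drop_suffix (n-1)).isInfix
  · rename_i hcond
    intro s hs
    rcases List.infix_cons_iff.mp hs with hpre | hinf
    · rw [consec_cons_sub s hn, List.cons_prefix_cons] at hpre
      obtain ⟨rfl, hpre⟩ := hpre
      exact hcond hpre
    · exact hp s hinf

lemma noRot_run (w : List (Fin n)) (hn : 1 ≤ n) {p : ℕ × List (Fin n)} (hp : NoRot p.2) :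
    NoRot (run w p).2 := by
  induction w with
  | nil => exact hp
  | cons i w ih => exact noRot_step i hn ih

lemma noRot_nf (w : List (Fin n)) (hn : 1 ≤ n) : NoRot (nf w).2 :=
  noRot_run w hn noRot_nil

lemma run_consec (hn : 3 ≤ n) : ∀ (l : ℕ), 1 ≤ l → l ≤ n →
    ∀ (s : Fin n) (m : ℕ) (u : List (Fin n)), NoRot u →
    run (consec s l) (m, u) =
      if consec (s + (l : Fin n)) (n - l) <+: u then (m+1, u.drop (n-l))
      else (m, consec s l ++ u) := by
  intro l
  induction l with
  | zero => omega
  | succ l ih =>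
    intro _ hln s m u hu
    rcases Nat.eq_zero_or_pos l with rfl | hl1
    · show step s (m, u) = _
      unfold step
      norm_num
    · have hln' : l ≤ n := by omega
      have key := ih hl1 hln' (s+1) m u hu
      have hstart : s + 1 + (l : Fin n) = s + ((l+1 : ℕ) : Fin n) := by push_cast; ring
      rw [hstart] at key
      rw [consec_succ, run_cons, key]
      set t : Fin n := s + ((l+1 : ℕ) : Fin n) with ht
      by_cases h1 : consec t (n - l) <+: u
      · rw [if_pos h1]
        obtain ⟨v, hv⟩ := h1
        have hdrop : u.drop (n-l) = v := by
          rw [← hv, List.drop_left' (by simp)]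
        have hnotrig : ¬ consec (s+1) (n-1) <+: u.drop (n-l) := by
          rw [hdrop]
          rintro ⟨v', hv'⟩
          have hts : t + ((n-l : ℕ) : Fin n) = s + 1 := by
            rw [ht]
            have : ((l+1 : ℕ) : Fin n) + ((n-l : ℕ) : Fin n) = ((n+1 : ℕ) : Fin n) := by
              rw [← Nat.cast_add]; congr 1; omega
            rw [add_assoc, this]
            push_cast
            simp [add_comm]
          have hbig : consec t ((n-l) + (n-1)) <+: u := by
            rw [consec_append, hts, ← hv, ← hv']
            simp [List.append_assoc]
          exact hu.not_long_prefix (by omega) hbig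
        show step s (m+1, u.drop (n-l)) = _
        unfold step
        rw [if_neg hnotrig]
        have houter : consec t (n - (l+1)) <+: u := by
          refine (consec_prefix_consec t (by omega)).trans ⟨v, hv⟩
        rw [if_pos houter]
        have hsplit : consec t (n-l) = consec t (n-l-1) ++ [s] := by
          rw [consec_snoc_sub t (by omega)]
          congr 2
          rw [ht]
          have : ((l+1 : ℕ) : Fin n) + ((n-l-1 : ℕ) : Fin n) = ((n : ℕ) : Fin n) := by
            rw [← Nat.cast_add]; congr 1; omega
          rw [add_assoc, this]
          simp
        have : u.drop (n - (l+1)) = s :: v := by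
          have hu' : u = consec t (n-l-1) ++ ([s] ++ v) := by
            rw [← hv, hsplit]; simp
          rw [show n - (l+1) = n - l - 1 from by omega, hu',
            List.drop_left' (by simp)]
          rfl
        rw [this, hdrop]
      · rw [if_neg h1]
        have hdecomp : consec (s+1) (n-1) = consec (s+1) l ++ consec t (n-1-l) := by
          conv_lhs => rw [show n - 1 = l + (n-1-l) from by omega]
          rw [consec_append, hstart]
        by_cases h2 : consec t (n - (l+1)) <+: u
        · rw [if_pos h2]
          show step s (m, consec (s+1) l ++ u) = _
          unfold step
          have hcond : consec (s+1) (n-1) <+: consec (s+1) l ++ u := by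
            rw [hdecomp, List.prefix_append_right_inj]
            rw [show n - 1 - l = n - (l+1) from by omega]
            exact h2
          rw [if_pos hcond]
          simp only
          congr 1
          rw [show n - 1 = l + (n-1-l) from by omega, ← List.drop_drop,
            List.drop_left' (consec_length _ _)]
          congr 1
          omega
        · rw [if_neg h2]
          show step s (m, consec (s+1) l ++ u) = _
          unfold step
          have hcond : ¬ consec (s+1) (n-1) <+: consec (s+1) l ++ u := by
            rw [hdecomp, List.prefix_append_right_inj,
              show n - 1 - l = n - (l+1) from by omega]
            exact h2
          rw [if_neg hcond]
          simp

lemma run_rot (hn : 3 ≤ n) (k : Fin n) (m : ℕ) {u : List (Fin n)} (hu : NoRot u) :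
    run (consec k n) (m, u) = (m+1, u) := by
  rw [run_consec hn n (by omega) le_rfl k m u hu]
  simp

/-! ### The congruence interface -/

def crel (x y : List (Fin n)) : Prop :=
  conGen (cycRel n) (FreeMonoid.ofList x) (FreeMonoid.ofList y)

lemma crel.refl (x : List (Fin n)) : crel x x := (conGen (cycRel n)).refl _
lemma crel.symm {x y : List (Fin n)} (h : crel x y) : crel y x := (conGen (cycRel n)).symm h
lemma crel.trans {x y z : List (Fin n)} (h1 : crel x y) (h2 : crel y z) : crel x z :=
  (conGen (cycRel n)).trans h1 h2
lemma crel_append {x y z w : List (Fin n)} (h1 : crel x y) (h2 : crel z w) :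
    crel (x ++ z) (y ++ w) := by
  have := (conGen (cycRel n)).mul h1 h2
  simpa [crel, FreeMonoid.ofList_append] using this

lemma prod_map_of (L : List (Fin n)) :
    (L.map (FreeMonoid.of (α := Fin n))).prod = FreeMonoid.ofList L := by
  induction L with
  | nil => rfl
  | cons a L ih => simp [FreeMonoid.ofList_cons, ih]

lemma permWord_eq (σ : Equiv.Perm (Fin n)) :
    permWord n σ = FreeMonoid.ofList ((List.finRange n).map σ) := by
  rw [permWord, show ((List.finRange n).map fun i => FreeMonoid.of (σ i))
      = ((List.finRange n).map σ).map FreeMonoid.of from by rw [List.map_map]; rfl,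
    prod_map_of]

lemma finRotate_pow_apply (k : ℕ) (i : Fin n) :
    (finRotate n ^ k) i = i + (k : Fin n) := by
  obtain ⟨m, rfl⟩ : ∃ m, n = m + 1 := ⟨n - 1, by have := NeZero.pos n; omega⟩
  induction k generalizing i with
  | zero => simp
  | succ k ihk =>
    rw [pow_succ, Equiv.Perm.mul_apply, finRotate_succ_apply, ihk]
    push_cast
    ring

lemma consec_eq_map (s : Fin n) (L : ℕ) :
    consec s L = (List.range L).map (fun j : ℕ => s + (j : Fin n)) := by
  induction L generalizing s with
  | zero => simp
  | succ L ih =>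
    rw [List.range_succ_eq_map]
    simp only [consec_succ, List.map_cons, List.map_map, ih]
    congr 1
    · simp
    apply List.map_congr_left
    intro a _
    simp only [Function.comp_apply]
    push_cast
    ring

lemma map_finRange_add (t : Fin n) :
    (List.finRange n).map (fun i => i + t) = consec t n := by
  have h1 : (List.finRange n).map (fun i => i + t)
      = (List.finRange n).map ((fun j : ℕ => t + (j : Fin n)) ∘ Fin.val) := by
    apply List.map_congr_left
    intro a _
    simp [Fin.cast_val_eq_self, add_comm]
  rw [h1, ← List.map_map, (show (List.finRange n).map Fin.val = List.range n from
    List.ext_getElem (by simp) (by simp)), ← consec_eq_map]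

lemma permWord_pow_eq (k : ℕ) :
    permWord n (finRotate n ^ k) = FreeMonoid.ofList (consec (k : Fin n) n) := by
  rw [permWord_eq, ← map_finRange_add]
  congr 1
  apply List.map_congr_left
  intro a _
  exact finRotate_pow_apply k a

lemma permWord_one_eq : permWord n 1 = FreeMonoid.ofList (consec (0 : Fin n) n) := by
  have := permWord_pow_eq (n := n) 0
  simpa using this

lemma crel_rot (j : Fin n) : crel (consec (0 : Fin n) n) (consec j n) := by
  apply ConGen.Rel.of
  refine ⟨permWord_one_eq.symm, j.val, ?_⟩
  rw [permWord_pow_eq, Fin.cast_val_eq_self]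

lemma crel_rot' (j j' : Fin n) : crel (consec j n) (consec j' n) :=
  (crel_rot j).symm.trans (crel_rot j')

/-! ### Reconstruction from normal form -/

def pad : ℕ → List (Fin n) → List (Fin n)
  | 0, u => u
  | (m+1), u => consec (0 : Fin n) n ++ pad m u

@[simp] lemma pad_zero (u : List (Fin n)) : pad 0 u = u := rfl
@[simp] lemma pad_succ (m : ℕ) (u : List (Fin n)) :
    pad (m+1) u = consec (0 : Fin n) n ++ pad m u := rfl

lemma pad_crel_congr {x y : List (Fin n)} (m : ℕ) (h : crel x y) :
    crel (pad m x) (pad m y) := by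
  induction m with
  | zero => exact h
  | succ m ih => exact crel_append (crel.refl _) ih

lemma pad_rot0 (m : ℕ) (v : List (Fin n)) :
    pad m (consec (0 : Fin n) n ++ v) = consec (0 : Fin n) n ++ pad m v := by
  induction m with
  | zero => rfl
  | succ m ih => simp [ih]

lemma cons_rot_swap (hn : 1 ≤ n) (i : Fin n) (Y : List (Fin n)) :
    crel ([i] ++ (consec (0 : Fin n) n ++ Y)) (consec (0 : Fin n) n ++ ([i] ++ Y)) := by
  have e1 : [i] ++ consec (i+1) n = consec i n ++ [i] := by
    rw [List.singleton_append, ← consec_succ, consec_snoc]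
    simp
  have c1 : crel ([i] ++ (consec (0 : Fin n) n ++ Y)) ([i] ++ (consec (i+1) n ++ Y)) :=
    crel_append (crel.refl [i]) (crel_append (crel_rot (i+1)) (crel.refl Y))
  have c2 : crel ((consec i n ++ [i]) ++ Y) ((consec (0:Fin n) n ++ [i]) ++ Y) :=
    crel_append (crel_append (crel_rot' i 0) (crel.refl [i])) (crel.refl Y)
  refine c1.trans ?_
  have : [i] ++ (consec (i+1) n ++ Y) = (consec i n ++ [i]) ++ Y := by
    rw [← List.append_assoc, e1]
  rw [this]
  refine c2.trans ?_
  rw [List.append_assoc]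
  exact crel.refl _

lemma cons_pad_swap (hn : 1 ≤ n) (i : Fin n) (m : ℕ) (u : List (Fin n)) :
    crel ([i] ++ pad m u) (pad m ([i] ++ u)) := by
  induction m with
  | zero => exact crel.refl _
  | succ m ih =>
    simp only [pad_succ]
    refine (cons_rot_swap hn i (pad m u)).trans ?_
    exact crel_append (crel.refl _) ih

lemma step_pad (hn : 1 ≤ n) (i : Fin n) (m : ℕ) (u : List (Fin n)) :
    crel (pad (step i (m, u)).1 (step i (m, u)).2) ([i] ++ pad m u) := by
  unfold step
  by_cases h : consec (i+1) (n-1) <+: u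
  · rw [if_pos h]
    obtain ⟨v, hv⟩ := h
    simp only
    have hdrop : u.drop (n-1) = v := by rw [← hv, List.drop_left' (by simp)]
    rw [hdrop, pad_succ]
    refine crel.symm ?_
    refine (cons_pad_swap hn i m u).trans ?_
    have hiu : [i] ++ u = consec i n ++ v := by
      rw [← hv, consec_cons_sub i hn]
      simp
    rw [hiu]
    refine (pad_crel_congr m (crel_append (crel_rot' i 0) (crel.refl v))).trans ?_
    rw [pad_rot0]
    exact crel.refl _
  · rw [if_neg h]
    simp only
    refine crel.symm ?_
    simpa using cons_pad_swap hn i m u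

lemma crel_pad_nf (hn : 1 ≤ n) (w : List (Fin n)) :
    crel (pad (nf w).1 (nf w).2) w := by
  induction w with
  | nil => exact crel.refl _
  | cons i w ih =>
    have h1 : nf (i :: w) = step i (nf w) := rfl
    rw [h1]
    refine (step_pad hn i (nf w).1 (nf w).2).trans ?_
    exact crel_append (crel.refl [i]) ih

/-! ### Invariance of the normal form -/

def nfCon (hn : 3 ≤ n) : Con (FreeMonoid (Fin n)) where
  r x y := ∀ p : ℕ × List (Fin n), NoRot p.2 →
    run (FreeMonoid.toList x) p = run (FreeMonoid.toList y) p
  iseqv := ⟨fun _ _ _ => rfl, fun h p hp => (h p hp).symm,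
    fun h1 h2 p hp => (h1 p hp).trans (h2 p hp)⟩
  mul' := by
    intro a b c d h1 h2 p hp
    simp only [FreeMonoid.toList_mul, run_append]
    rw [h2 p hp, h1 _ (noRot_run _ (by omega) hp)]

lemma conGen_le_nfCon (hn : 3 ≤ n) : conGen (cycRel n) ≤ nfCon hn := by
  apply Con.conGen_le.2
  rintro x y ⟨hx, k, hy⟩
  intro p hp
  rw [hx, hy, permWord_one_eq, permWord_pow_eq]
  simp only [FreeMonoid.toList_ofList]
  rw [show p = (p.1, p.2) from rfl, run_rot hn _ _ hp, run_rot hn _ _ hp]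

lemma crel_iff_nf (hn : 3 ≤ n) (x y : List (Fin n)) : crel x y ↔ nf x = nf y := by
  constructor
  · intro h
    have h2 := conGen_le_nfCon hn h (0, []) noRot_nil
    simpa [FreeMonoid.toList_ofList, nf] using h2
  · intro h
    refine (crel_pad_nf (by omega) x).symm.trans ?_
    rw [h]
    exact crel_pad_nf (by omega) y

/-! ### Injectivity of `step` -/

lemma rot_prefix_of_trigger (hn : 3 ≤ n) {i : Fin n} {w v : List (Fin n)}
    (h : consec (i+1) (n-1) ++ ([i] ++ v) = w) : consec (i+1) n <+: w := by
  have e : consec (i+1) n = consec (i+1) (n-1) ++ [i] := by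
    rw [consec_snoc_sub (i+1) (by omega : 1 ≤ n)]
    congr 2
    have hcast : ((n-1 : ℕ) : Fin n) + 1 = 0 := by
      have hq : ((n-1 : ℕ) : Fin n) + ((1 : ℕ) : Fin n) = ((n : ℕ) : Fin n) := by
        rw [← Nat.cast_add]; congr 1; omega
      simpa using hq
    calc i + 1 + ((n-1 : ℕ) : Fin n) = i + (((n-1 : ℕ) : Fin n) + 1) := by ring
    _ = i := by rw [hcast, add_zero]
  exact ⟨v, by rw [e, ← h]; simp⟩

lemma step_inj (hn : 3 ≤ n) (i : Fin n) {p q : ℕ × List (Fin n)}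
    (hp : NoRot p.2) (hq : NoRot q.2) (h : step i p = step i q) : p = q := by
  unfold step at h
  by_cases h1 : consec (i+1) (n-1) <+: p.2 <;> by_cases h2 : consec (i+1) (n-1) <+: q.2
  · rw [if_pos h1, if_pos h2, Prod.mk.injEq] at h
    obtain ⟨v, hv⟩ := h1
    obtain ⟨v', hv'⟩ := h2
    have hdv : p.2.drop (n-1) = v := by rw [← hv, List.drop_left' (by simp)]
    have hdv' : q.2.drop (n-1) = v' := by rw [← hv', List.drop_left' (by simp)]
    have : p.2 = q.2 := by rw [← hv, ← hv', ← hdv, ← hdv', h.2]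
    exact Prod.ext (by omega) this
  · rw [if_pos h1, if_neg h2, Prod.mk.injEq] at h
    exfalso
    obtain ⟨v, hv⟩ := h1
    have hdv : p.2.drop (n-1) = v := by rw [← hv, List.drop_left' (by simp)]
    rw [hdv] at h
    have : consec (i+1) (n-1) ++ ([i] ++ q.2) = p.2 := by
      rw [← hv, List.singleton_append, ← h.2]
    exact hp.not_long_prefix le_rfl (rot_prefix_of_trigger hn this)
  · rw [if_neg h1, if_pos h2, Prod.mk.injEq] at h
    exfalso
    obtain ⟨v, hv⟩ := h2
    have hdv : q.2.drop (n-1) = v := by rw [← hv, List.drop_left' (by simp)]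
    rw [hdv] at h
    have : consec (i+1) (n-1) ++ ([i] ++ p.2) = q.2 := by
      rw [← hv, List.singleton_append, h.2]
    exact hq.not_long_prefix le_rfl (rot_prefix_of_trigger hn this)
  · rw [if_neg h1, if_neg h2, Prod.mk.injEq] at h
    exact Prod.ext h.1 (by simpa using h.2)

/-! ### Cancellation -/

lemma left_cancel_letter (hn : 3 ≤ n) (i : Fin n) {x y : List (Fin n)}
    (h : crel (i :: x) (i :: y)) : crel x y := by
  rw [crel_iff_nf hn] at h ⊢
  have hx : nf (i :: x) = step i (nf x) := rfl
  have hy : nf (i :: y) = step i (nf y) := rfl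
  rw [hx, hy] at h
  exact step_inj hn i (noRot_nf x (by omega)) (noRot_nf y (by omega)) h

lemma left_cancel_list (hn : 3 ≤ n) (s : List (Fin n)) {x y : List (Fin n)}
    (h : crel (s ++ x) (s ++ y)) : crel x y := by
  induction s with
  | nil => simpa using h
  | cons a s ih =>
    apply ih
    exact left_cancel_letter hn a (by simpa using h)

/-! ### The reversal anti-automorphism -/

def phi (w : List (Fin n)) : List (Fin n) := (w.map (fun i => -i)).reverse

lemma phi_append (x y : List (Fin n)) : phi (x ++ y) = phi y ++ phi x := by
  simp [phi]

@[simp] lemma phi_phi (w : List (Fin n)) : phi (phi w) = w := by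
  simp [phi, List.map_reverse, List.map_map]

lemma phi_consec (s : Fin n) (L : ℕ) :
    phi (consec s L) = consec (1 - s - (L : Fin n)) L := by
  induction L generalizing s with
  | zero => simp [phi]
  | succ L ih =>
    have hcons : phi (s :: consec (s+1) L) = phi (consec (s+1) L) ++ [-s] := by
      simp [phi]
    rw [consec_succ, hcons, ih]
    have h1 : (1 : Fin n) - (s+1) - (L : Fin n) = -s - (L : Fin n) := by ring
    have h2 : (1 : Fin n) - s - ((L+1 : ℕ) : Fin n) = -s - (L : Fin n) := by
      push_cast; ring
    rw [h1, h2, consec_snoc]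
    congr 2
    ring

lemma crel_phi {x y : List (Fin n)} (hn : 3 ≤ n) (h : crel x y) :
    crel (phi x) (phi y) := by
  let c' : Con (FreeMonoid (Fin n)) :=
  { r := fun a b => crel (phi (FreeMonoid.toList a)) (phi (FreeMonoid.toList b)),
    iseqv := ⟨fun _ => crel.refl _, fun h => h.symm, fun h1 h2 => h1.trans h2⟩,
    mul' := by
      intro a b c d h1 h2
      simp only [FreeMonoid.toList_mul, phi_append]
      exact crel_append h2 h1 }
  have hle : conGen (cycRel n) ≤ c' := by
    apply Con.conGen_le.2
    rintro a b ⟨ha, k, hb⟩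
    show crel (phi (FreeMonoid.toList a)) (phi (FreeMonoid.toList b))
    rw [ha, hb, permWord_one_eq, permWord_pow_eq]
    simp only [FreeMonoid.toList_ofList]
    rw [phi_consec, phi_consec]
    simp only [Fin.natCast_self, sub_zero]
    exact crel_rot' _ _
  exact hle h

lemma right_cancel_list (hn : 3 ≤ n) (s : List (Fin n)) {x y : List (Fin n)}
    (h : crel (x ++ s) (y ++ s)) : crel x y := by
  have h1 := crel_phi hn h
  rw [phi_append, phi_append] at h1
  have h2 := left_cancel_list hn (phi s) h1
  have h3 := crel_phi hn h2
  simpa using h3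

end CancelAux

/-- `S_n` is (left and right) cancellative. -/
theorem cancellative (n : ℕ) (hn : 3 ≤ n) :
    ∀ x y s : Scyc n, (s * x = s * y → x = y) ∧ (x * s = y * s → x = y) := by
  haveI : NeZero n := ⟨by omega⟩
  intro x y s
  obtain ⟨wx, rfl⟩ := Con.mk'_surjective (c := conGen (cycRel n)) x
  obtain ⟨wy, rfl⟩ := Con.mk'_surjective (c := conGen (cycRel n)) y
  obtain ⟨ws, rfl⟩ := Con.mk'_surjective (c := conGen (cycRel n)) s
  have hmul : ∀ a b : FreeMonoid (Fin n),
      (conGen (cycRel n)).mk' a * (conGen (cycRel n)).mk' b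
        = (conGen (cycRel n)).mk' (a * b) := fun a b => rfl
  have hiff : ∀ a b : FreeMonoid (Fin n),
      ((conGen (cycRel n)).mk' a = (conGen (cycRel n)).mk' b) ↔ conGen (cycRel n) a b :=
    fun a b => Con.eq _
  have hofto : ∀ a b : FreeMonoid (Fin n),
      conGen (cycRel n) a b ↔
        CancelAux.crel (FreeMonoid.toList a) (FreeMonoid.toList b) := by
    intro a b
    unfold CancelAux.crel
    rw [FreeMonoid.ofList_toList, FreeMonoid.ofList_toList]
  constructor
  · intro h
    change (conGen (cycRel n)).mk' (ws * wx) = (conGen (cycRel n)).mk' (ws * wy) at h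
    rw [hiff, hofto] at h
    simp only [FreeMonoid.toList_mul] at h
    have := CancelAux.left_cancel_list hn (FreeMonoid.toList ws) h
    refine (hiff wx wy).2 ((hofto wx wy).2 ?_)
    exact this
  · intro h
    change (conGen (cycRel n)).mk' (wx * ws) = (conGen (cycRel n)).mk' (wy * ws) at h
    rw [hiff, hofto] at h
    simp only [FreeMonoid.toList_mul] at h
    have := CancelAux.right_cancel_list hn (FreeMonoid.toList ws) h
    refine (hiff wx wy).2 ((hofto wx wy).2 ?_)
    exact this
end

section
/- Let n ≥ 3 and let G_n be the group presented by generators a_1, …, a_n and relations a_1 a_2 ⋯ a_n = a_{σ(1)} ⋯ a_{σ(n)} for all σ in the cyclic subgroup of Sym_n generated by the n-cycle (1,2,…,n). Then G_n is isomorphic to F × ℤ, where F is a free group of rank n−1. -/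
/-- The word `a_{σ(1)} a_{σ(2)} ⋯ a_{σ(n)}` in the free group on `n` generators. -/
def permGWord (n : ℕ) (σ : Equiv.Perm (Fin n)) : FreeGroup (Fin n) :=
  ((List.finRange n).map fun i => FreeGroup.of (σ i)).prod

/-- The relators `(a_1 ⋯ a_n)(a_{σ(1)} ⋯ a_{σ(n)})⁻¹`, where `σ` runs through the cyclic
subgroup of `Sym_n` generated by the `n`-cycle `(1,2,…,n)` (i.e. `finRotate n`). -/
def cycGRels (n : ℕ) : Set (FreeGroup (Fin n)) :=
  {w | ∃ k : ℕ, w = permGWord n 1 * (permGWord n (finRotate n ^ k))⁻¹}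

namespace GnIsoAux

open List

/-- rotating a list conjugates its product. -/
lemma rotate_prod {G : Type*} [Group G] (l : List G) (k : ℕ) :
    (l.rotate k).prod = (l.take (k % l.length)).prod⁻¹ * l.prod * (l.take (k % l.length)).prod := by
  rcases Nat.eq_zero_or_pos l.length with h | h
  · rw [List.length_eq_zero_iff.mp h]; simp
  rw [← List.rotate_mod, List.rotate_eq_drop_append_take (Nat.mod_lt _ h).le, List.prod_append]
  have hsplit : l.prod = (l.take (k % l.length)).prod * (l.drop (k % l.length)).prod := by
    rw [← List.prod_append, List.take_append_drop]
  rw [hsplit]; group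

lemma map_pow_rotate (m k : ℕ) :
    (List.finRange (m+1)).map (⇑(finRotate (m+1) ^ k)) = (List.finRange (m+1)).rotate k := by
  induction k with
  | zero => simp
  | succ k ih =>
    have h1 : (List.finRange (m+1)).map (⇑(finRotate (m+1))) = (List.finRange (m+1)).rotate 1 := by
      apply List.ext_getElem (by simp)
      intro i h1 h2
      simp only [List.getElem_map, List.getElem_finRange, List.getElem_rotate,
        List.length_finRange, finRotate_succ_apply, Fin.ext_iff, Fin.val_add, Fin.val_one,
        Fin.cast_mk]
      simp [Nat.add_mod]
    have : finRotate (m+1) ^ (k+1) = finRotate (m+1) ^ k * finRotate (m+1) := pow_succ _ _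
    rw [this]
    have hcoe : ⇑(finRotate (m+1) ^ k * finRotate (m+1)) =
        (⇑(finRotate (m+1) ^ k)) ∘ (⇑(finRotate (m+1))) := rfl
    rw [hcoe, ← List.map_map, h1, List.map_rotate, ih, List.rotate_rotate]

end GnIsoAux

section Gside
open GnIsoAux List

variable (m : ℕ)

/-- the canonical generators of `G`. -/
noncomputable def aGen (i : Fin (m+1)) : PresentedGroup (cycGRels (m+1)) :=
  PresentedGroup.of i

/-- the list of generators. -/
noncomputable def Lgen : List (PresentedGroup (cycGRels (m+1))) :=
  (List.finRange (m+1)).map (aGen m)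

/-- the central element `z = a_1 ⋯ a_n`. -/
noncomputable def zGen : PresentedGroup (cycGRels (m+1)) := (Lgen m).prod

lemma mk_permGWord (σ : Equiv.Perm (Fin (m+1))) :
    PresentedGroup.mk (cycGRels (m+1)) (permGWord (m+1) σ) =
      (((List.finRange (m+1)).map σ).map (aGen m)).prod := by
  unfold permGWord
  rw [map_list_prod, List.map_map, List.map_map]
  rfl

lemma rel_rotate (k : ℕ) : ((Lgen m).rotate k).prod = zGen m := by
  have hmem : permGWord (m+1) 1 * (permGWord (m+1) (finRotate (m+1) ^ k))⁻¹ ∈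
      cycGRels (m+1) := ⟨k, rfl⟩
  have h1 : PresentedGroup.mk (cycGRels (m+1))
      (permGWord (m+1) 1 * (permGWord (m+1) (finRotate (m+1) ^ k))⁻¹) = 1 := by
    exact (QuotientGroup.eq_one_iff _).mpr (Subgroup.subset_normalClosure hmem)
  rw [map_mul, map_inv, mul_inv_eq_one] at h1
  have h2 := (mk_permGWord m 1).symm.trans (h1.trans (mk_permGWord m (finRotate (m+1) ^ k)))
  rw [map_pow_rotate, List.map_rotate] at h2
  have h3 : ((List.finRange (m+1)).map (⇑(1 : Equiv.Perm (Fin (m+1))))) =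
      List.finRange (m+1) := by simp
  rw [h3] at h2
  exact h2.symm

lemma z_commute (g : PresentedGroup (cycGRels (m+1))) : Commute (zGen m) g := by
  have htake : ∀ k : ℕ, Commute (zGen m) (((Lgen m).take k).prod) := by
    intro k
    rcases Nat.lt_or_ge k (Lgen m).length with hk | hk
    · have h1 := rel_rotate m k
      rw [List.rotate_eq_drop_append_take hk.le, List.prod_append] at h1
      have h2 : ((Lgen m).take k).prod * ((Lgen m).drop k).prod = zGen m := by
        rw [← List.prod_append, List.take_append_drop]; rfl
      have : Commute (((Lgen m).take k).prod) (((Lgen m).drop k).prod) :=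
        (h2.trans h1.symm)
      calc zGen m * ((Lgen m).take k).prod
          = ((Lgen m).take k).prod * ((Lgen m).drop k).prod * ((Lgen m).take k).prod := by
            rw [h2]
        _ = ((Lgen m).take k).prod * zGen m := by rw [mul_assoc, h1]
    · rw [List.take_of_length_le hk]
      exact Commute.refl _
  have hgen : ∀ i : Fin (m+1), Commute (zGen m) (aGen m i) := by
    intro i
    have hlen : (i : ℕ) < (Lgen m).length := by simp [Lgen]; exact Nat.lt_succ_iff.mp i.isLt
    have hget : (Lgen m).take ((i : ℕ)+1) = (Lgen m).take (i : ℕ) ++ [aGen m i] := by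
      rw [List.take_succ]
      congr 1
      rw [List.getElem?_eq_getElem hlen]
      simp [Lgen]
    have h1 := htake ((i : ℕ)+1)
    rw [hget, List.prod_append, List.prod_singleton] at h1
    have h2 := ((htake (i : ℕ)).inv_right).mul_right h1
    rwa [inv_mul_cancel_left] at h2
  induction g with
  | H w =>
    induction w using FreeGroup.induction_on with
    | C1 => rw [map_one]; exact Commute.one_right _
    | of x => exact hgen x
    | inv_of x h => rw [map_inv]; exact h.inv_right
    | mul x y hx hy => rw [map_mul]; exact hx.mul_right hy

end Gside

section Tside
open GnIsoAux List

variable (m : ℕ)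

/-- images of the generators in `F × ℤ`. -/
noncomputable def tgt (i : Fin (m+1)) : FreeGroup (Fin m) × Multiplicative ℤ :=
  if h : (i : ℕ) < m then (FreeGroup.of (⟨i, h⟩ : Fin m), 1)
  else ((((List.finRange m).map FreeGroup.of).prod)⁻¹, Multiplicative.ofAdd 1)

lemma tgt_castSucc (i : Fin m) : tgt m i.castSucc = (FreeGroup.of i, 1) := by
  rw [tgt, dif_pos (by simpa using i.isLt)]
  simp

lemma tgt_last : tgt m (Fin.last m) =
    ((((List.finRange m).map FreeGroup.of).prod)⁻¹, Multiplicative.ofAdd 1) := by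
  rw [tgt, dif_neg (by simp)]

lemma ztgt_eq : ((List.finRange (m+1)).map (tgt m)).prod = (1, Multiplicative.ofAdd 1) := by
  rw [List.finRange_succ_last, List.map_append, List.prod_append, List.map_map]
  have h1 : (tgt m) ∘ Fin.castSucc = fun i : Fin m => ((FreeGroup.of i : FreeGroup (Fin m)), (1 : Multiplicative ℤ)) := by
    funext i; exact tgt_castSucc m i
  rw [h1]
  have h2 : ((List.finRange m).map fun i : Fin m =>
      ((FreeGroup.of i : FreeGroup (Fin m)), (1 : Multiplicative ℤ))).prod =
      (((List.finRange m).map FreeGroup.of).prod, 1) := by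
    induction (List.finRange m) with
    | nil => simp; rfl
    | cons x l ih => simp [ih, Prod.ext_iff]
  rw [h2]
  simp [tgt_last, Prod.ext_iff]

lemma ztgt_central (p : FreeGroup (Fin m) × Multiplicative ℤ) :
    Commute ((1, Multiplicative.ofAdd 1) : FreeGroup (Fin m) × Multiplicative ℤ) p := by
  obtain ⟨x, y⟩ := p
  simp [Commute, SemiconjBy, Prod.ext_iff, mul_comm]

lemma lift_tgt_rels : ∀ r ∈ cycGRels (m+1), FreeGroup.lift (tgt m) r = 1 := by
  rintro r ⟨k, rfl⟩
  rw [map_mul, map_inv, mul_inv_eq_one]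
  have key : ∀ σ : Equiv.Perm (Fin (m+1)),
      FreeGroup.lift (tgt m) (permGWord (m+1) σ) =
        (((List.finRange (m+1)).map σ).map (tgt m)).prod := by
    intro σ
    unfold permGWord
    rw [map_list_prod, List.map_map, List.map_map]
    congr 1
    apply List.map_congr_left
    intro i _
    exact FreeGroup.lift_apply_of
  rw [key, key, map_pow_rotate, List.map_rotate]
  have h3 : ((List.finRange (m+1)).map (⇑(1 : Equiv.Perm (Fin (m+1))))) =
      List.finRange (m+1) := by simp
  rw [h3, rotate_prod, ztgt_eq]
  set P := (((List.finRange (m+1)).map (tgt m)).take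
      (k % ((List.finRange (m+1)).map (tgt m)).length)).prod with hP
  rw [mul_assoc, (ztgt_central m P).eq, inv_mul_cancel_left]

/-- the homomorphism `G → F × ℤ`. -/
noncomputable def phi : PresentedGroup (cycGRels (m+1)) →* FreeGroup (Fin m) × Multiplicative ℤ :=
  PresentedGroup.toGroup (lift_tgt_rels m)

/-- the homomorphism `F × ℤ → G`. -/
noncomputable def psiF : FreeGroup (Fin m) →* PresentedGroup (cycGRels (m+1)) :=
  FreeGroup.lift (fun i => aGen m i.castSucc)

noncomputable def psi : FreeGroup (Fin m) × Multiplicative ℤ →* PresentedGroup (cycGRels (m+1)) :=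
  MonoidHom.noncommCoprod (psiF m) (zpowersHom _ (zGen m))
    (fun a b => ((z_commute m (psiF m a)).zpow_left _).symm)

lemma phi_aGen (i : Fin (m+1)) : phi m (aGen m i) = tgt m i :=
  PresentedGroup.toGroup.of _

lemma phi_zGen : phi m (zGen m) = (1, Multiplicative.ofAdd 1) := by
  have : phi m (zGen m) = ((List.finRange (m+1)).map (tgt m)).prod := by
    unfold zGen Lgen
    rw [map_list_prod, List.map_map]
    congr 1
    apply List.map_congr_left
    intro i _
    exact phi_aGen m i
  rw [this, ztgt_eq]

lemma zGen_split : zGen m = (((List.finRange m).map fun i => aGen m i.castSucc).prod) *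
    aGen m (Fin.last m) := by
  unfold zGen Lgen
  rw [List.finRange_succ_last, List.map_append, List.prod_append, List.map_map]
  simp [Function.comp_def]

end Tside

section Iso
open GnIsoAux List

variable (m : ℕ)

lemma psi_apply (x : FreeGroup (Fin m)) (y : Multiplicative ℤ) :
    psi m (x, y) = psiF m x * zGen m ^ (Multiplicative.toAdd y) := rfl

lemma phi_comp_psi : (phi m).comp (psi m) = MonoidHom.id _ := by
  have hF : (phi m).comp (psiF m) = MonoidHom.inl (FreeGroup (Fin m)) (Multiplicative ℤ) := by
    apply FreeGroup.ext_hom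
    intro i
    show phi m (psiF m (FreeGroup.of i)) = _
    rw [psiF, FreeGroup.lift_apply_of, phi_aGen, tgt_castSucc]
    rfl
  apply MonoidHom.ext
  rintro ⟨x, y⟩
  show phi m (psi m (x, y)) = (x, y)
  rw [psi_apply, map_mul, map_zpow, phi_zGen]
  have h2 : phi m (psiF m x) = (x, 1) := DFunLike.congr_fun hF x
  rw [h2]
  refine Prod.ext (by simp) ?_
  show 1 * (Multiplicative.ofAdd 1) ^ (Multiplicative.toAdd y) = y
  simp [← ofAdd_zsmul]

lemma psi_comp_phi : (psi m).comp (phi m) = MonoidHom.id _ := by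
  apply PresentedGroup.ext
  intro i
  show psi m (phi m (aGen m i)) = aGen m i
  rw [phi_aGen]
  rcases Nat.lt_or_ge (i : ℕ) m with h | h
  · have hi : i = (⟨(i : ℕ), h⟩ : Fin m).castSucc := by
      ext; simp
    rw [hi, tgt_castSucc, psi_apply]
    simp [psiF, FreeGroup.lift_apply_of]
  · have hi : i = Fin.last m := by
      ext; simp only [Fin.val_last]; omega
    rw [hi, tgt_last, psi_apply, map_inv]
    have hB : psiF m (((List.finRange m).map FreeGroup.of).prod) =
        ((List.finRange m).map fun j : Fin m => aGen m j.castSucc).prod := by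
      rw [map_list_prod, List.map_map]
      congr 1
    rw [hB]
    simp only [toAdd_ofAdd, zpow_one]
    rw [zGen_split, inv_mul_cancel_left]

end Iso


/-- the group `G_n` presented by generators `a_1, …, a_n` and relations
`a_1 ⋯ a_n = a_{σ(1)} ⋯ a_{σ(n)}` for `σ` in the cyclic subgroup generated by the `n`-cycle
is isomorphic to `F × ℤ` with `F` free of rank `n - 1`. -/
theorem Gn_iso (n : ℕ) (hn : 3 ≤ n) :
    Nonempty (PresentedGroup (cycGRels n) ≃* FreeGroup (Fin (n - 1)) × Multiplicative ℤ) := by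
  obtain ⟨m, rfl⟩ : ∃ m, n = m + 1 := ⟨n - 1, by omega⟩
  exact ⟨MonoidHom.toMulEquiv (phi m) (psi m) (psi_comp_phi m) (phi_comp_psi m)⟩
end

section
/- Let n ≥ 3 and let S_n be the monoid presented by generators a_1, …, a_n and relations a_1 a_2 ⋯ a_n = a_{σ(1)} ⋯ a_{σ(n)} for σ in the cyclic group generated by the n-cycle. Let P = (a_1 a_2 ⋯ a_n)·S_n. Then P is a prime ideal of the monoid S_n: P is a two-sided ideal (S_n·P ⊆ P and P·S_n ⊆ P), and for all a, b ∈ S_n \ P there exists s ∈ S_n such that a·s·b ∉ P. -/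
namespace PPaux

open List
open Fin.NatCast

/-! ### Fin and list preliminaries -/

open Fin.CommRing in
lemma finRotate_pow_apply (m k : ℕ) (j : Fin (m + 1)) :
    ((finRotate (m + 1)) ^ k) j = j + (k : Fin (m + 1)) := by
  induction k generalizing j with
  | zero => simp
  | succ k ih =>
    rw [pow_succ, Equiv.Perm.mul_apply, finRotate_succ_apply, ih]
    push_cast
    ring

lemma toList_prod_map_of {α : Type*} (l : List α) :
    FreeMonoid.toList ((l.map FreeMonoid.of).prod) = l := by
  induction l with
  | nil => rfl
  | cons a t ih =>
    simp only [List.map_cons, List.prod_cons, FreeMonoid.toList_mul, FreeMonoid.toList_of, ih,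
      List.singleton_append]

lemma permWord_toList (n : ℕ) (σ : Equiv.Perm (Fin n)) :
    FreeMonoid.toList (permWord n σ) = (List.finRange n).map σ := by
  rw [permWord,
    show ((List.finRange n).map fun i => FreeMonoid.of (σ i))
        = (((List.finRange n).map σ).map FreeMonoid.of) by rw [List.map_map]; rfl]
  exact toList_prod_map_of _

/-- The rotated word `a_c a_{c+1} ⋯ a_{c-1}` as a list. -/
def RL (m : ℕ) (c : Fin (m + 1)) : List (Fin (m + 1)) :=
  (List.finRange (m + 1)).map (· + c)

/-- The tail of `RL m c`. -/
def TL (m : ℕ) (c : Fin (m + 1)) : List (Fin (m + 1)) :=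
  (List.finRange m).map (fun j => Fin.succ j + c)

lemma RL_cons (m : ℕ) (c : Fin (m + 1)) : RL m c = c :: TL m c := by
  rw [RL, TL, List.finRange_succ, List.map_cons, List.map_map, zero_add]
  rfl

@[simp] lemma length_RL (m : ℕ) (c : Fin (m + 1)) : (RL m c).length = m + 1 := by
  simp [RL]

@[simp] lemma length_TL (m : ℕ) (c : Fin (m + 1)) : (TL m c).length = m := by
  simp [TL]

lemma nodup_RL (m : ℕ) (c : Fin (m + 1)) : (RL m c).Nodup :=
  (List.nodup_finRange _).map (fun a b h => by
    have : a + c = b + c := h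
    exact add_right_cancel this)

lemma map_add_one_finRange (m : ℕ) :
    (List.finRange (m + 1)).map (· + (1 : Fin (m + 1))) =
      ((List.finRange m).map Fin.succ) ++ [(0 : Fin (m + 1))] := by
  apply List.ext_getElem (by simp)
  intro j h1 h2
  have hj1 : j < m + 1 := by simpa using h1
  simp only [List.getElem_map, List.getElem_finRange]
  by_cases hj : j < m
  · have hlt : j < ((List.finRange m).map Fin.succ).length := by simpa using hj
    rw [List.getElem_append_left hlt]
    simp only [List.getElem_map, List.getElem_finRange]
    apply Fin.ext
    rw [Fin.val_add_one_of_lt (by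
      rw [Fin.lt_iff_val_lt_val]
      simpa using hj)]
    rfl
  · have hj' : j = m := by omega
    have hge : ((List.finRange m).map Fin.succ).length ≤ j := by simp [hj']
    rw [List.getElem_append_right hge]
    have hcast : (Fin.cast (List.length_finRange (n := m + 1)) ⟨j, by simpa using hj1⟩ : Fin (m + 1))
        = Fin.last m := by
      apply Fin.ext
      simpa using hj'
    rw [hcast]
    simp

lemma RL_succ (m : ℕ) (c : Fin (m + 1)) : RL m (c + 1) = TL m c ++ [c] := by
  have h1 : RL m (c + 1) = ((List.finRange (m + 1)).map (· + (1 : Fin (m + 1)))).map (· + c) := by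
    rw [RL, List.map_map]
    congr 1
    funext j
    show j + (c + 1) = (j + 1) + c
    rw [add_assoc, add_comm 1 c]
  rw [h1, map_add_one_finRange, List.map_append, List.map_map]
  simp only [List.map_singleton, zero_add]
  rfl

/-- The free-monoid word for the `k`-th rotation. -/
def rotW (m k : ℕ) : FreeMonoid (Fin (m + 1)) := permWord (m + 1) (finRotate (m + 1) ^ k)

lemma rotW_toList (m k : ℕ) : FreeMonoid.toList (rotW m k) = RL m (k : Fin (m + 1)) := by
  rw [rotW, permWord_toList, RL]
  congr 1
  funext j
  exact finRotate_pow_apply m k j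

/-! ### Rotation factors -/

/-- `x` contains some rotation of `a_0 ⋯ a_m` as a factor. -/
def HasRot (m : ℕ) (x : FreeMonoid (Fin (m + 1))) : Prop :=
  ∃ (k : ℕ) (p q : FreeMonoid (Fin (m + 1))), x = p * rotW m k * q

/-- List version. -/
def HasRotL (m : ℕ) (w : List (Fin (m + 1))) : Prop :=
  ∃ (c : Fin (m + 1)) (p q : List (Fin (m + 1))), w = p ++ RL m c ++ q

lemma hasRot_iff (m : ℕ) (x : FreeMonoid (Fin (m + 1))) :
    HasRot m x ↔ HasRotL m (FreeMonoid.toList x) := by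
  constructor
  · rintro ⟨k, p, q, rfl⟩
    exact ⟨(k : Fin (m + 1)), FreeMonoid.toList p, FreeMonoid.toList q, by
      simp [FreeMonoid.toList_mul, rotW_toList]⟩
  · rintro ⟨c, p, q, h⟩
    refine ⟨c.val, FreeMonoid.ofList p, FreeMonoid.ofList q, ?_⟩
    apply FreeMonoid.toList.injective
    simp only [FreeMonoid.toList_mul, FreeMonoid.toList_ofList, rotW_toList,
      Fin.cast_val_eq_self, h]

lemma hasRot_mul_left (m : ℕ) (x : FreeMonoid (Fin (m + 1))) {y : FreeMonoid (Fin (m + 1))}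
    (h : HasRot m y) : HasRot m (x * y) := by
  obtain ⟨k, p, q, rfl⟩ := h
  exact ⟨k, x * p, q, by simp [mul_assoc]⟩

lemma hasRot_mul_right (m : ℕ) (x : FreeMonoid (Fin (m + 1))) {y : FreeMonoid (Fin (m + 1))}
    (h : HasRot m y) : HasRot m (y * x) := by
  obtain ⟨k, p, q, rfl⟩ := h
  exact ⟨k, p, q * x, by simp [mul_assoc]⟩

/-- A congruence containing the defining relations; it relates two distinct words only when
both contain a rotation factor. -/
def goodCon (m : ℕ) : Con (FreeMonoid (Fin (m + 1))) where
  r x y := x = y ∨ (HasRot m x ∧ HasRot m y)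
  iseqv := by
    constructor
    · intro x; exact Or.inl rfl
    · intro x y h
      rcases h with rfl | ⟨h1, h2⟩
      · exact Or.inl rfl
      · exact Or.inr ⟨h2, h1⟩
    · intro x y z h1 h2
      rcases h1 with rfl | ⟨hx, hy⟩
      · exact h2
      · rcases h2 with rfl | ⟨_, hz⟩
        · exact Or.inr ⟨hx, hy⟩
        · exact Or.inr ⟨hx, hz⟩
  mul' := by
    intro w x y z h1 h2
    rcases h1 with rfl | ⟨h1a, h1b⟩
    · rcases h2 with rfl | ⟨h2a, h2b⟩
      · exact Or.inl rfl
      · exact Or.inr ⟨hasRot_mul_left m w h2a, hasRot_mul_left m w h2b⟩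
    · rcases h2 with rfl | ⟨h2a, h2b⟩
      · exact Or.inr ⟨hasRot_mul_right m y h1a, hasRot_mul_right m y h1b⟩
      · exact Or.inr ⟨hasRot_mul_right m y h1a, hasRot_mul_right m z h1b⟩

lemma permWord_one_eq_rotW (m : ℕ) : permWord (m + 1) 1 = rotW m 0 := by
  rw [rotW, pow_zero]

lemma conGen_le_good (m : ℕ) : conGen (cycRel (m + 1)) ≤ goodCon m := by
  apply Con.conGen_le.mpr
  intro x y hxy
  obtain ⟨hx, k, hy⟩ := hxy
  right
  constructor
  · exact ⟨0, 1, 1, by rw [hx, permWord_one_eq_rotW, one_mul, mul_one]⟩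
  · exact ⟨k, 1, 1, by rw [hy, one_mul, mul_one]; rfl⟩

lemma noRot_eq {m : ℕ} {x y : FreeMonoid (Fin (m + 1))}
    (h : conGen (cycRel (m + 1)) x y) (hx : ¬ HasRot m x) : x = y := by
  have := conGen_le_good m h
  rcases this with h' | ⟨h1, _⟩
  · exact h'
  · exact absurd h1 hx

/-! ### Quotient facts -/

/-- The quotient map, with codomain `Scyc n`. -/
def mkS (n : ℕ) : FreeMonoid (Fin n) →* Scyc n := Con.mk' _

lemma mkS_surjective (n : ℕ) : Function.Surjective (mkS n) :=
  Con.mk'_surjective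

lemma mkS_eq_iff {n : ℕ} {a b : FreeMonoid (Fin n)} :
    mkS n a = mkS n b ↔ conGen (cycRel n) a b :=
  Con.eq _

lemma zc_eq (m : ℕ) : zc (m + 1) = mkS (m + 1) (permWord (m + 1) 1) := by
  rw [zc, permWord, MonoidHom.map_list_prod (mkS (m + 1)), List.map_map]
  rfl

lemma mk_rotW (m k : ℕ) :
    mkS (m + 1) (rotW m k) = mkS (m + 1) (permWord (m + 1) 1) := by
  have h : conGen (cycRel (m + 1)) (permWord (m + 1) 1) (rotW m k) :=
    ConGen.Rel.of _ _ ⟨rfl, k, rfl⟩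
  exact (mkS_eq_iff.mpr h).symm

lemma agen_zc (m : ℕ) (i : Fin (m + 1)) :
    agen i * zc (m + 1) = zc (m + 1) * agen i := by
  have key : rotW m i.val * FreeMonoid.of i = FreeMonoid.of i * rotW m (i.val + 1) := by
    apply FreeMonoid.toList.injective
    simp only [FreeMonoid.toList_mul, rotW_toList, FreeMonoid.toList_of]
    have h1 : ((i.val : Fin (m + 1))) = i := Fin.cast_val_eq_self i
    have h2 : ((i.val + 1 : ℕ) : Fin (m + 1)) = (i.val : Fin (m + 1)) + 1 := by push_cast; ring
    rw [h2, h1, RL_succ, RL_cons]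
    simp
  have hagen : agen i = mkS (m + 1) (FreeMonoid.of i) := rfl
  calc agen i * zc (m + 1)
      = mkS (m + 1) (FreeMonoid.of i) * mkS (m + 1) (permWord (m + 1) 1) := by
        rw [zc_eq, hagen]
    _ = mkS (m + 1) (FreeMonoid.of i) * mkS (m + 1) (rotW m (i.val + 1)) := by rw [mk_rotW]
    _ = mkS (m + 1) (FreeMonoid.of i * rotW m (i.val + 1)) := by rw [map_mul]
    _ = mkS (m + 1) (rotW m i.val * FreeMonoid.of i) := by rw [key]
    _ = mkS (m + 1) (rotW m i.val) * mkS (m + 1) (FreeMonoid.of i) := by rw [map_mul]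
    _ = mkS (m + 1) (permWord (m + 1) 1) * mkS (m + 1) (FreeMonoid.of i) := by rw [mk_rotW]
    _ = zc (m + 1) * agen i := by rw [zc_eq, hagen]

lemma zc_central (m : ℕ) (x : Scyc (m + 1)) : zc (m + 1) * x = x * zc (m + 1) := by
  obtain ⟨w, rfl⟩ := mkS_surjective (m + 1) x
  have key : ∀ l : List (Fin (m + 1)),
      zc (m + 1) * mkS (m + 1) (FreeMonoid.ofList l)
        = mkS (m + 1) (FreeMonoid.ofList l) * zc (m + 1) := by
    intro l
    induction l with
    | nil =>
      rw [show FreeMonoid.ofList ([] : List (Fin (m + 1))) = 1 from rfl, map_one, mul_one,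
        one_mul]
    | cons a t ih =>
      have hagen : mkS (m + 1) (FreeMonoid.of a) = agen a := rfl
      rw [FreeMonoid.ofList_cons, map_mul, ← mul_assoc, hagen, ← agen_zc m a, mul_assoc, ih,
        ← mul_assoc]
  have hw := key (FreeMonoid.toList w)
  rwa [FreeMonoid.ofList_toList] at hw

lemma hasRot_memP (m : ℕ) {u : FreeMonoid (Fin (m + 1))} (h : HasRot m u) :
    ∃ s, mkS (m + 1) u = zc (m + 1) * s := by
  obtain ⟨k, p, q, rfl⟩ := h
  refine ⟨mkS (m + 1) p * mkS (m + 1) q, ?_⟩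
  rw [map_mul, map_mul, mk_rotW, ← zc_eq, (zc_central m (mkS (m + 1) p)).symm, mul_assoc]

/-! ### Combinatorics of words -/

lemma split3 {α : Type*} {x y p r q : List α} (h : x ++ y = p ++ r ++ q) :
    (∃ q', x = p ++ r ++ q') ∨ (∃ p', y = p' ++ r ++ q ∧ p = x ++ p') ∨
    (∃ r1 r2, r = r1 ++ r2 ∧ r1 ≠ [] ∧ r2 ≠ [] ∧ x = p ++ r1 ∧ y = r2 ++ q) := by
  rw [List.append_assoc] at h
  rcases List.append_eq_append_iff.mp h with ⟨a', hp, hy⟩ | ⟨c', hx, hrq⟩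
  · exact Or.inr (Or.inl ⟨a', by rw [hy, List.append_assoc], hp⟩)
  · rcases List.append_eq_append_iff.mp hrq with ⟨a2, hc, hq⟩ | ⟨c2, hr, hy⟩
    · exact Or.inl ⟨a2, by rw [hx, hc, List.append_assoc]⟩
    · rcases eq_or_ne c' [] with rfl | hc'ne
      · refine Or.inr (Or.inl ⟨[], ?_, ?_⟩)
        · simp only [List.nil_append] at hr ⊢
          rw [hy, hr]
        · rw [List.append_nil] at hx
          rw [hx, List.append_nil]
      · rcases eq_or_ne c2 [] with rfl | hc2ne
        · refine Or.inl ⟨[], ?_⟩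
          rw [List.append_nil] at hr
          rw [List.append_nil, hr]
          exact hx
        · exact Or.inr (Or.inr ⟨c', c2, hr, hc'ne, hc2ne, hx, hy⟩)

lemma badEnd_unique {m : ℕ} {u : List (Fin (m + 1))} {i j c c' : Fin (m + 1)}
    {p p' : List (Fin (m + 1))} (hm : 1 ≤ m)
    (h1 : u ++ [i] = p ++ RL m c) (h2 : u ++ [j] = p' ++ RL m c') : i = j := by
  have len1 : u.length + 1 = p.length + (m + 1) := by
    have := congrArg List.length h1
    simpa using this
  have len2 : u.length + 1 = p'.length + (m + 1) := by
    have := congrArg List.length h2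
    simpa using this
  have hp : p.length ≤ u.length := by omega
  have hpp : p'.length = p.length := by omega
  have e1 : RL m c = u.drop p.length ++ [i] := by
    have := congrArg (List.drop p.length) h1
    rw [List.drop_append, List.drop_append,
      Nat.sub_eq_zero_of_le hp, Nat.sub_self, List.drop_length] at this
    simpa using this.symm
  have e2 : RL m c' = u.drop p.length ++ [j] := by
    have := congrArg (List.drop p.length) h2
    rw [List.drop_append, List.drop_append,
      Nat.sub_eq_zero_of_le hp, ← hpp, Nat.sub_self, List.drop_length] at this
    rw [hpp] at this
    simpa using this.symm
  have hdlen : (u.drop p.length).length = m := by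
    rw [List.length_drop]; omega
  obtain ⟨d0, dt, hd⟩ : ∃ d0 dt, u.drop p.length = d0 :: dt := by
    cases hdd : u.drop p.length with
    | nil => rw [hdd] at hdlen; simp at hdlen; omega
    | cons d0 dt => exact ⟨d0, dt, rfl⟩
  rw [hd] at e1 e2
  rw [RL_cons] at e1 e2
  obtain ⟨hc1, ht1⟩ := List.cons.injEq .. ▸ e1
  have hc0 : c = d0 := by
    have := congrArg (fun l => l.head?) e1
    simpa using this
  have hc0' : c' = d0 := by
    have := congrArg (fun l => l.head?) e2
    simpa using this
  have hcc : c = c' := hc0.trans hc0'.symm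
  rw [hcc] at e1
  have : (d0 :: dt) ++ [i] = (d0 :: dt) ++ [j] := by
    have := e1.symm.trans e2
    simpa using this
  have := List.append_cancel_left this
  simpa using this

lemma badStart_unique {m : ℕ} {v : List (Fin (m + 1))} {i j c c' : Fin (m + 1)}
    {q q' : List (Fin (m + 1))} (hm : 1 ≤ m)
    (h1 : i :: v = RL m c ++ q) (h2 : j :: v = RL m c' ++ q') : i = j := by
  obtain ⟨m0, rfl⟩ : ∃ m0, m = m0 + 1 := ⟨m - 1, by omega⟩
  rw [RL_cons] at h1 h2
  simp only [List.cons_append, List.cons.injEq] at h1 h2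
  obtain ⟨hi, hv1⟩ := h1
  obtain ⟨hj, hv2⟩ := h2
  have hTL : ∀ c : Fin (m0 + 2), TL (m0 + 1) c
      = (Fin.succ 0 + c) :: (((List.finRange m0).map Fin.succ).map (fun j => Fin.succ j + c)) := by
    intro c
    rw [TL, List.finRange_succ, List.map_cons, List.map_map]
  rw [hTL] at hv1 hv2
  have : Fin.succ 0 + c = Fin.succ 0 + c' := by
    have h3 := hv1.symm.trans hv2
    injection h3 with h4 _
  have hcc : c = c' := add_left_cancel this
  rw [hi, hj, hcc]

lemma noRot_concat {m : ℕ} (hm : 2 ≤ m) {u v : List (Fin (m + 1))} {i : Fin (m + 1)}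
    (hu : ¬ HasRotL m u) (hv : ¬ HasRotL m v)
    (hA : ∀ (c : Fin (m + 1)) p, u ++ [i] ≠ p ++ RL m c)
    (hB : ∀ (c : Fin (m + 1)) q, i :: v ≠ RL m c ++ q) :
    ¬ HasRotL m (u ++ i :: i :: v) := by
  rintro ⟨c, p, q, h⟩
  rcases split3 h with ⟨q', hA'⟩ | ⟨p', hy, hp⟩ | ⟨r1, r2, hr, h1ne, h2ne, hx, hy⟩
  · exact hu ⟨c, p, q', hA'⟩
  · match p', hy with
    | [], hy =>
      rw [List.nil_append, RL_cons, List.cons_append] at hy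
      obtain ⟨hic, hy2⟩ : i = c ∧ i :: v = TL m c ++ q := by
        constructor
        · exact (List.cons.injEq .. ▸ hy).1
        · exact (List.cons.injEq .. ▸ hy).2
      -- TL m c is nonempty, its head equals i = c, contradicting nodup of RL
      obtain ⟨t0, tt, ht⟩ : ∃ t0 tt, TL m c = t0 :: tt := by
        cases htt : TL m c with
        | nil =>
          have := length_TL m c
          rw [htt] at this
          simp at this
          omega
        | cons t0 tt => exact ⟨t0, tt, rfl⟩
      rw [ht, List.cons_append] at hy2
      have hit : i = t0 := (List.cons.injEq .. ▸ hy2).1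
      have hnd := nodup_RL m c
      rw [RL_cons, ht, List.nodup_cons] at hnd
      exact hnd.1 (by rw [← hic, hit]; exact List.mem_cons_self)
    | [a], hy =>
      simp only [List.cons_append, List.singleton_append, List.cons.injEq] at hy
      obtain ⟨hai, hy2⟩ := hy
      exact hB c q hy2
    | a :: b :: p'', hy =>
      simp only [List.cons_append, List.cons.injEq] at hy
      exact hv ⟨c, p'', q, hy.2.2⟩
  · match r2, h2ne, hy with
    | [a], _, hy =>
      simp only [List.singleton_append, List.cons.injEq] at hy
      obtain ⟨rfl, -⟩ := hy
      exact hA c p (by rw [hx, hr, List.append_assoc])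
    | a :: b :: r2', _, hy =>
      simp only [List.cons_append, List.cons.injEq] at hy
      obtain ⟨rfl, rfl, -⟩ := hy
      have hnd := nodup_RL m c
      rw [hr] at hnd
      have := List.Nodup.of_append_right hnd
      rw [List.nodup_cons] at this
      exact this.1 (List.mem_cons_self)

lemma exists_good_letter {m : ℕ} (hm : 2 ≤ m) (u v : List (Fin (m + 1))) :
    ∃ i : Fin (m + 1), (∀ (c : Fin (m + 1)) p, u ++ [i] ≠ p ++ RL m c) ∧
      (∀ (c : Fin (m + 1)) q, i :: v ≠ RL m c ++ q) := by
  by_contra hcon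
  push_neg at hcon
  have hclass : ∀ i : Fin (m + 1),
      (∃ c p, u ++ [i] = p ++ RL m c) ∨ (∃ c q, i :: v = RL m c ++ q) := by
    intro i
    rcases Classical.em (∃ c p, u ++ [i] = p ++ RL m c) with hE | hNE
    · exact Or.inl hE
    · refine Or.inr (hcon i ?_)
      push_neg at hNE
      exact hNE
  have hm1 : 1 ≤ m := by omega
  set x0 : Fin (m + 1) := ⟨0, by omega⟩
  set x1 : Fin (m + 1) := ⟨1, by omega⟩
  set x2 : Fin (m + 1) := ⟨2, by omega⟩
  have h01 : x0 ≠ x1 := by simp [x0, x1, Fin.ext_iff]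
  have h02 : x0 ≠ x2 := by simp [x0, x2, Fin.ext_iff]
  have h12 : x1 ≠ x2 := by simp [x1, x2, Fin.ext_iff]
  rcases hclass x0 with ⟨c0, p0, e0⟩ | ⟨c0, q0, e0⟩ <;>
    rcases hclass x1 with ⟨c1, p1, e1⟩ | ⟨c1, q1, e1⟩ <;>
      rcases hclass x2 with ⟨c2, p2, e2⟩ | ⟨c2, q2, e2⟩
  · exact h01 (badEnd_unique hm1 e0 e1)
  · exact h01 (badEnd_unique hm1 e0 e1)
  · exact h02 (badEnd_unique hm1 e0 e2)
  · exact h12 (badStart_unique hm1 e1 e2)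
  · exact h12 (badEnd_unique hm1 e1 e2)
  · exact h02 (badStart_unique hm1 e0 e2)
  · exact h01 (badStart_unique hm1 e0 e1)
  · exact h01 (badStart_unique hm1 e0 e1)

end PPaux

open PPaux in
/-- `P = (a_1 ⋯ a_n) S_n` is a prime ideal of the monoid `S_n`:
it is a two-sided ideal and for all `a, b ∉ P` there is `s` with `a s b ∉ P`. -/
theorem P_prime_monoid_ideal (n : ℕ) (hn : 3 ≤ n) :
    ∀ P : Set (Scyc n), P = {x | ∃ s, x = zc n * s} →
      (∀ p ∈ P, ∀ s : Scyc n, s * p ∈ P ∧ p * s ∈ P) ∧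
      (∀ a b : Scyc n, a ∉ P → b ∉ P → ∃ s : Scyc n, a * s * b ∉ P) := by
  obtain ⟨m, rfl⟩ : ∃ m, n = m + 1 := ⟨n - 1, by omega⟩
  have hm : 2 ≤ m := by omega
  intro P hP
  subst hP
  constructor
  · rintro p ⟨t, rfl⟩ s
    constructor
    · exact ⟨s * t, by rw [← mul_assoc, ← zc_central m s, mul_assoc]⟩
    · exact ⟨t * s, by rw [mul_assoc]⟩
  · intro a b ha hb
    obtain ⟨u, rfl⟩ := mkS_surjective (m + 1) a
    obtain ⟨v, rfl⟩ := mkS_surjective (m + 1) b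
    have hu : ¬ HasRot m u := fun h => ha (hasRot_memP m h)
    have hv : ¬ HasRot m v := fun h => hb (hasRot_memP m h)
    have hul : ¬ HasRotL m (FreeMonoid.toList u) := fun h => hu ((hasRot_iff m u).mpr h)
    have hvl : ¬ HasRotL m (FreeMonoid.toList v) := fun h => hv ((hasRot_iff m v).mpr h)
    obtain ⟨i, hA, hB⟩ := exists_good_letter hm (FreeMonoid.toList u) (FreeMonoid.toList v)
    refine ⟨mkS (m + 1) (FreeMonoid.of i * FreeMonoid.of i), ?_⟩
    intro hmem
    obtain ⟨s, hs⟩ := hmem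
    obtain ⟨t', rfl⟩ := mkS_surjective (m + 1) s
    rw [zc_eq, ← map_mul, ← map_mul, ← map_mul] at hs
    have hrel : conGen (cycRel (m + 1))
        (u * (FreeMonoid.of i * FreeMonoid.of i) * v) (permWord (m + 1) 1 * t') :=
      mkS_eq_iff.mp hs
    have hnor : ¬ HasRot m (u * (FreeMonoid.of i * FreeMonoid.of i) * v) := by
      rw [hasRot_iff]
      have heq : FreeMonoid.toList (u * (FreeMonoid.of i * FreeMonoid.of i) * v)
          = FreeMonoid.toList u ++ i :: i :: FreeMonoid.toList v := by
        simp [FreeMonoid.toList_mul, FreeMonoid.toList_of]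
      rw [heq]
      exact noRot_concat hm hul hvl hA hB
    have heqw := noRot_eq hrel hnor
    exact hnor ⟨0, 1, t', by rw [heqw, permWord_one_eq_rotW, one_mul]⟩
end

section
/- Let K be a field, n ≥ 3, and let S_n be the monoid presented by generators a_1, …, a_n and relations a_1 a_2 ⋯ a_n = a_{σ(1)} ⋯ a_{σ(n)} for σ in the cyclic group generated by the n-cycle. Let P = (a_1 ⋯ a_n)·S_n ⊆ S_n. If Q is a prime ideal of the monoid algebra K[S_n] such that Q contains at least one element of S_n (viewed as basis elements of K[S_n]), then P ⊆ Q, i.e. every element of P lies in Q. -/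
theorem prod_map_of {α : Type*} (l : List α) :
    (l.map FreeMonoid.of).prod = FreeMonoid.ofList l := by
  induction l with
  | nil => rfl
  | cons a t ih => rw [List.map_cons, List.prod_cons, FreeMonoid.ofList_cons, ih]

theorem permWord_eq (n : ℕ) (σ : Equiv.Perm (Fin n)) :
    permWord n σ = FreeMonoid.ofList ((List.finRange n).map σ) := by
  unfold permWord
  rw [← prod_map_of, List.map_map]
  rfl

theorem map_finRotate (n : ℕ) :
    (List.finRange n).map (finRotate n) = (List.finRange n).rotate 1 := by
  cases n with
  | zero => rfl
  | succ m =>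
    apply List.ext_getElem
    · simp
    · intro i h1 h2
      simp only [List.getElem_map, List.getElem_finRange, List.getElem_rotate,
        List.length_finRange] at *
      rw [finRotate_succ_apply]
      ext
      simp [Fin.add_def, Nat.add_comm i 1]

theorem map_finRotate_pow (n k : ℕ) :
    (List.finRange n).map (⇑(finRotate n ^ k)) = (List.finRange n).rotate k := by
  induction k with
  | zero => simp
  | succ k ih =>
    have : ⇑(finRotate n ^ (k + 1)) = ⇑(finRotate n ^ k) ∘ ⇑(finRotate n) := by
      rw [pow_succ]; ext x; simp [Equiv.Perm.mul_apply]
    rw [this, ← List.map_map, map_finRotate, List.map_rotate, ih, List.rotate_rotate]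

def mkL {n : ℕ} (l : List (Fin n)) : Scyc n := (conGen (cycRel n)).mk' (FreeMonoid.ofList l)

theorem mkL_append {n : ℕ} (l₁ l₂ : List (Fin n)) : mkL (l₁ ++ l₂) = mkL l₁ * mkL l₂ := by
  unfold mkL
  rw [FreeMonoid.ofList_append, map_mul]
  rfl

theorem mkL_nil {n : ℕ} : (mkL [] : Scyc n) = 1 := by
  unfold mkL
  rw [FreeMonoid.ofList_nil, map_one]
  rfl

theorem zc_eq (n : ℕ) : zc n = mkL (List.finRange n) := by
  unfold zc mkL agen
  rw [← prod_map_of, MonoidHom.map_list_prod, List.map_map]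
  rfl

theorem mkL_rotate (n k : ℕ) : mkL ((List.finRange n).rotate k) = zc n := by
  rw [zc_eq]
  unfold mkL
  symm
  apply (Con.eq _).2
  have h1 : FreeMonoid.ofList (List.finRange n) = permWord n 1 := by
    rw [permWord_eq]; simp
  have h2 : FreeMonoid.ofList ((List.finRange n).rotate k) = permWord n (finRotate n ^ k) := by
    rw [permWord_eq, map_finRotate_pow]
  rw [h1, h2]
  exact ConGen.Rel.of _ _ ⟨rfl, k, rfl⟩

theorem rotate_split (n : ℕ) (hn : 0 < n) (i : Fin n) :
    ∃ t : List (Fin n), (List.finRange n).rotate i.val = i :: t ∧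
      (List.finRange n).rotate (i.val + 1) = t ++ [i] := by
  have hlen : ((List.finRange n).rotate i.val).length = n := by simp
  obtain ⟨a, t, hat⟩ : ∃ a t, (List.finRange n).rotate i.val = a :: t := by
    cases h : (List.finRange n).rotate i.val with
    | nil => rw [h] at hlen; simp at hlen; omega
    | cons a t => exact ⟨a, t, rfl⟩
  have ha : a = i := by
    have h0 : ((List.finRange n).rotate i.val)[0]? = some a := by simp [hat]
    rw [List.getElem?_rotate (by simp [hn])] at h0
    simp only [List.length_finRange, Nat.zero_add, Nat.mod_eq_of_lt i.isLt] at h0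
    have h1 : (List.finRange n)[i.val]? = some i := by
      rw [List.getElem?_eq_getElem (by simp [i.isLt])]
      simp
    rw [h1, Option.some_inj] at h0
    exact h0.symm
  subst ha
  refine ⟨t, hat, ?_⟩
  rw [← List.rotate_rotate, hat, List.rotate_cons_succ, List.rotate_zero]

theorem zc_comm_agen (n : ℕ) (hn : 0 < n) (i : Fin n) : zc n * agen i = agen i * zc n := by
  obtain ⟨t, h1, h2⟩ := rotate_split n hn i
  calc zc n * agen i = mkL ((List.finRange n).rotate i.val) * mkL [i] := by
        rw [mkL_rotate]; rfl
    _ = mkL ((List.finRange n).rotate i.val ++ [i]) := (mkL_append _ _).symm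
    _ = mkL ((i :: t) ++ [i]) := by rw [h1]
    _ = mkL ([i] ++ (t ++ [i])) := by simp
    _ = mkL [i] * mkL (t ++ [i]) := mkL_append _ _
    _ = mkL [i] * mkL ((List.finRange n).rotate (i.val + 1)) := by rw [h2]
    _ = agen i * zc n := by rw [mkL_rotate]; rfl

theorem zc_central (n : ℕ) (hn : 0 < n) (u : Scyc n) : zc n * u = u * zc n := by
  obtain ⟨w, rfl⟩ := Con.mk'_surjective (c := conGen (cycRel n)) u
  have : ∀ l : List (Fin n), zc n * mkL l = mkL l * zc n := by
    intro l
    induction l with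
    | nil => rw [mkL_nil, mul_one, one_mul]
    | cons a t ih =>
      have hc : zc n * mkL [a] = mkL [a] * zc n := zc_comm_agen n hn a
      have he : (a :: t) = [a] ++ t := rfl
      rw [he, mkL_append, ← mul_assoc, hc, mul_assoc, ih, ← mul_assoc]
  exact this w.toList


/-- every prime (two-sided) ideal `Q` of `K[S_n]` that contains an element
of `S_n` contains `P = (a_1 ⋯ a_n) S_n`.  Here `Q` is a left ideal that is also closed
under right multiplication (i.e. a two-sided ideal), it is proper, and primality is
expressed elementwise (equivalently: `A·B ⊆ Q` implies `A ⊆ Q` or `B ⊆ Q` for two-sided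
ideals `A`, `B`). -/
theorem primes_meeting_S_contain_P (K : Type*) [Field K] (n : ℕ) (hn : 3 ≤ n)
    (Q : Ideal (MonoidAlgebra K (Scyc n)))
    (hright : ∀ x ∈ Q, ∀ r : MonoidAlgebra K (Scyc n), x * r ∈ Q)
    (hproper : Q ≠ ⊤)
    (hprime : ∀ a b : MonoidAlgebra K (Scyc n), (∀ r, a * r * b ∈ Q) → a ∈ Q ∨ b ∈ Q)
    (hmeets : ∃ s : Scyc n, MonoidAlgebra.of K (Scyc n) s ∈ Q) :
    ∀ p : Scyc n, (∃ s, p = zc n * s) → MonoidAlgebra.of K (Scyc n) p ∈ Q := by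
  have hn0 : 0 < n := by omega
  set ofK := MonoidAlgebra.of K (Scyc n) with hofK
  -- ofK (zc n) commutes with everything
  have hcomm : ∀ r : MonoidAlgebra K (Scyc n), ofK (zc n) * r = r * ofK (zc n) := by
    intro r
    induction r using MonoidAlgebra.induction_on with
    | of g =>
      rw [← map_mul, ← map_mul, zc_central n hn0 g]
    | add f g hf hg => rw [mul_add, add_mul, hf, hg]
    | smul r f hf => rw [mul_smul_comm, smul_mul_assoc, hf]
  -- main claim: ofK (zc n) ∈ Q
  have hz : ofK (zc n) ∈ Q := by
    obtain ⟨s, hs⟩ := hmeets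
    obtain ⟨w, rfl⟩ := Con.mk'_surjective (c := conGen (cycRel n)) s
    have key : ∀ l : List (Fin n), ofK (mkL l) ∈ Q → ofK (zc n) ∈ Q := by
      intro l
      induction l using List.reverseRecOn with
      | nil =>
        intro h
        rw [mkL_nil, map_one] at h
        exact absurd ((Ideal.eq_top_iff_one Q).2 h) hproper
      | append_singleton t i ih =>
        intro h
        obtain ⟨tl, h1, _⟩ := rotate_split n hn0 i
        have heq : mkL (t ++ [i]) * mkL tl = mkL t * zc n := by
          rw [← mkL_append, List.append_assoc, mkL_append t, List.singleton_append,
            ← h1, mkL_rotate]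
        have h2 : ofK (mkL t * zc n) ∈ Q := by
          have h4 := hright _ h (ofK (mkL tl))
          rwa [← map_mul, heq] at h4
        have hcond : ∀ r, ofK (zc n) * r * ofK (mkL t) ∈ Q := by
          intro r
          rw [hcomm, mul_assoc, ← map_mul, zc_central n hn0]
          exact Ideal.mul_mem_left Q r h2
        rcases hprime (ofK (zc n)) (ofK (mkL t)) hcond with h3 | h3
        · exact h3
        · exact ih h3
    exact key w.toList hs
  rintro p ⟨s, rfl⟩
  rw [map_mul]
  exact hright _ hz _
end
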